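/- arXiv:1704.01041 — 3 statements merged into one kernel-verified Lean document; each statement's English description precedes it below -/
import Mathlib

section
/- Let X be a random vector in ℝⁿ with finite moments of all orders. If X' is an independent copy of X, and X_rot, X_rot' are independent copies of the rotational symmetrization of X, then for every positive integer r, E[⟨X,X'⟩^r] ≥ E[⟨X_rot, X_rot'⟩^r]. -/
open MeasureTheory ProbabilityTheory Real
open scoped RealInnerProductSpace ENNReal

noncomputable section

/-- The standard gaussian measure on `ℝⁿ` (mean `0`, identity covariance). -/
def stdGaussian (n : ℕ) : Measure (EuclideanSpace ℝ (Fin n)) :=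
  (Measure.pi fun _ : Fin n => gaussianReal 0 1).map
    (EuclideanSpace.equiv (Fin n) ℝ).symm

/-- The uniform probability distribution on the unit sphere `S^{n-1}`, realized as the
pushforward of the standard gaussian under normalization. -/
def sphereUniform (n : ℕ) : Measure (EuclideanSpace ℝ (Fin n)) :=
  (stdGaussian n).map fun x => ‖x‖⁻¹ • x

/-- The `r`-th moment tensor `M^r = E[X^{⊗ r}]` of a distribution `ν` on `ℝⁿ`, realized in
coordinates as the element of the Euclidean space indexed by multi-indices `Fin r → Fin n`
whose `(i₁,…,i_r)` entry is `E[X_{i₁} ⋯ X_{i_r}]`.  The Euclidean inner product on this space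
is exactly the tensor inner product satisfying `⟪u^{⊗r}, v^{⊗r}⟫ = ⟪u,v⟫^r`. -/
def momentTensor {n : ℕ} (r : ℕ) (ν : Measure (EuclideanSpace ℝ (Fin n))) :
    EuclideanSpace ℝ (Fin r → Fin n) :=
  (EuclideanSpace.equiv (Fin r → Fin n) ℝ).symm fun idx => ∫ x, ∏ j, x (idx j) ∂ν

/-- The distribution of the rotational symmetrization `X_rot = ‖X‖·θ` of a distribution `ν`
on `ℝⁿ`, where `θ` is uniform on the sphere and independent of `‖X‖`. -/
def rotSymMeas {n : ℕ} (ν : Measure (EuclideanSpace ℝ (Fin n))) :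
    Measure (EuclideanSpace ℝ (Fin n)) :=
  ((ν.map fun x => ‖x‖).prod (sphereUniform n)).map fun p => p.1 • p.2

/-- The `r`-th eccentricity tensor `E^r_X = M^r_X − M^r_{X_rot}`. -/
def eccTensor {n : ℕ} (r : ℕ) (ν : Measure (EuclideanSpace ℝ (Fin n))) :
    EuclideanSpace ℝ (Fin r → Fin n) :=
  momentTensor r ν - momentTensor r (rotSymMeas ν)

variable {Ω : Type*} [MeasurableSpace Ω]

/-- The test matrix `Φ_{X,α} = E[e^{−α‖X‖²} X Xᵀ] / E[e^{−α‖X‖²}]`. -/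
def PhiMat {n : ℕ} (P : Measure Ω) (X : Ω → EuclideanSpace ℝ (Fin n)) (α : ℝ) :
    Matrix (Fin n) (Fin n) ℝ :=
  (∫ ω, Real.exp (-α * ‖X ω‖ ^ 2) ∂P)⁻¹ •
    Matrix.of fun i j => ∫ ω, Real.exp (-α * ‖X ω‖ ^ 2) * (X ω i * X ω j) ∂P

/-- The test matrix `Ψ_{X,α} = E[e^{−α⟨X,X'⟩} X (X')ᵀ] / E[e^{−α⟨X,X'⟩}]`, where `X'` is an
independent copy of `X`. -/
def PsiMat {n : ℕ} (P : Measure Ω) (X X' : Ω → EuclideanSpace ℝ (Fin n)) (α : ℝ) :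
    Matrix (Fin n) (Fin n) ℝ :=
  (∫ ω, Real.exp (-α * ⟪X ω, X' ω⟫) ∂P)⁻¹ •
    Matrix.of fun i j => ∫ ω, Real.exp (-α * ⟪X ω, X' ω⟫) * (X ω i * X' ω j) ∂P

/-- The partition function `Z_{Φ,X}(α) = E[e^{−α‖X‖²}]`. -/
def ZPhi {n : ℕ} (P : Measure Ω) (X : Ω → EuclideanSpace ℝ (Fin n)) (α : ℝ) : ℝ :=
  ∫ ω, Real.exp (-α * ‖X ω‖ ^ 2) ∂P

/-- The partition function `Z_{Ψ,X}(α) = E[e^{−α⟨X,X'⟩}]`. -/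
def ZPsi {n : ℕ} (P : Measure Ω) (X X' : Ω → EuclideanSpace ℝ (Fin n)) (α : ℝ) : ℝ :=
  ∫ ω, Real.exp (-α * ⟪X ω, X' ω⟫) ∂P

/-- `Z_{Φ,g}` for the standard gaussian on `ℝⁿ`. -/
def ZPhiGauss (n : ℕ) (α : ℝ) : ℝ := ∫ x, Real.exp (-α * ‖x‖ ^ 2) ∂stdGaussian n

/-- `Z_{Ψ,g}` for the standard gaussian on `ℝⁿ`. -/
def ZPsiGauss (n : ℕ) (α : ℝ) : ℝ :=
  ∫ p, Real.exp (-α * ⟪p.1, p.2⟫) ∂((stdGaussian n).prod (stdGaussian n))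

/-- `X` is subgaussian with subgaussian norm at most `K`:
every unit marginal `⟨X,v⟩` has `ψ₂`-norm at most `K`. -/
def SubgaussianLE {n : ℕ} (P : Measure Ω) (X : Ω → EuclideanSpace ℝ (Fin n)) (K : ℝ) : Prop :=
  ∀ v : EuclideanSpace ℝ (Fin n), ‖v‖ = 1 →
    ∫ ω, Real.exp (⟪X ω, v⟫ ^ 2 / K ^ 2) ∂P ≤ 2

/-- `X` is a subexponential random vector: the `ψ₁`-norms of the unit marginals `⟨X,v⟩` are
uniformly bounded. -/
def SubExp {n : ℕ} (P : Measure Ω) (X : Ω → EuclideanSpace ℝ (Fin n)) : Prop :=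
  ∃ K : ℝ, 0 < K ∧ ∀ v : EuclideanSpace ℝ (Fin n), ‖v‖ = 1 →
    ∫ ω, Real.exp (|⟪X ω, v⟫| / K) ∂P ≤ 2

/-- The `r`-th moment of a one-dimensional standard gaussian, `E[⟨g,v⟩^r]` for a unit vector
`v`. -/
def gaussMoment (r : ℕ) : ℝ := ∫ t : ℝ, t ^ r ∂gaussianReal 0 1

/-- `γ_r = E[|⟨g,v⟩|^r]` for a unit vector `v`. -/
def gammaMoment (r : ℕ) : ℝ := ∫ t : ℝ, |t| ^ r ∂gaussianReal 0 1

/-- The deviation from gaussian moments,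
`D_{X,r} = sup_{v ∈ S^{n-1}} |E[⟨X,v⟩^r] − E[⟨g,v⟩^r]|`. -/
def Ddev {n : ℕ} (P : Measure Ω) (X : Ω → EuclideanSpace ℝ (Fin n)) (r : ℕ) : ℝ :=
  ⨆ v : Metric.sphere (0 : EuclideanSpace ℝ (Fin n)) 1,
    |(∫ ω, ⟪X ω, (v : EuclideanSpace ℝ (Fin n))⟫ ^ r ∂P) - gaussMoment r|

/-- Coordinates (w.r.t. a fixed orthonormal basis of `E`) of the orthogonal projection of `X`
onto the subspace `E`; this represents the component `X̃` of `X` in `E`. -/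
def ngcaCoord {n : ℕ} (E : Submodule ℝ (EuclideanSpace ℝ (Fin n)))
    (X : Ω → EuclideanSpace ℝ (Fin n)) (ω : Ω) :
    EuclideanSpace ℝ (Fin (Module.finrank ℝ E)) :=
  (stdOrthonormalBasis ℝ E).repr (E.orthogonalProjectionOnto (X ω))

/-- The empirical test matrix `Φ̂` built from the data points `Xs 1, …, Xs N`. -/
def PhiHat {n N : ℕ} (Xs : Fin N → EuclideanSpace ℝ (Fin n)) (α : ℝ) :
    Matrix (Fin n) (Fin n) ℝ :=
  (∑ i, Real.exp (-α * ‖Xs i‖ ^ 2))⁻¹ •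
    Matrix.of fun a b => ∑ i, Real.exp (-α * ‖Xs i‖ ^ 2) * (Xs i a * Xs i b)

/-- The empirical test matrix `Ψ̂` built from the data points `Xs 1, …, Xs N, Xs' 1, …, Xs' N`. -/
def PsiHat {n N : ℕ} (Xs Xs' : Fin N → EuclideanSpace ℝ (Fin n)) (α : ℝ) :
    Matrix (Fin n) (Fin n) ℝ :=
  (2 * ∑ i, Real.exp (-α * ⟪Xs i, Xs' i⟫))⁻¹ •
    Matrix.of fun a b => ∑ i, Real.exp (-α * ⟪Xs i, Xs' i⟫) *
      (Xs i a * Xs' i b + Xs' i a * Xs i b)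

/-- The ℓ²→ℓ² operator norm of a real `n × n` matrix. -/
def opNorm {n : ℕ} (M : Matrix (Fin n) (Fin n) ℝ) : ℝ :=
  ‖Matrix.toEuclideanCLM (𝕜 := ℝ) M‖

/-- The matrix (in the standard basis) of the orthogonal projection onto a subspace `F ⊆ ℝⁿ`;
if the columns of `U` form an orthonormal basis of `F` this is `U Uᵀ`. -/
def projMat {n : ℕ} (F : Submodule ℝ (EuclideanSpace ℝ (Fin n))) :
    Matrix (Fin n) (Fin n) ℝ :=
  Matrix.of fun i j =>
    ⟪(F.subtypeL.comp F.orthogonalProjectionOnto) (EuclideanSpace.single j (1 : ℝ)),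
      EuclideanSpace.single i (1 : ℝ)⟫

/-- The distance `d(F,F') = ‖U Uᵀ − U' (U')ᵀ‖_F` between two subspaces of `ℝⁿ`
(the Frobenius norm of the difference of the orthogonal projections). -/
def subDist {n : ℕ} (F F' : Submodule ℝ (EuclideanSpace ℝ (Fin n))) : ℝ :=
  Real.sqrt (∑ i, ∑ j, (projMat F i j - projMat F' i j) ^ 2)

/-- The span of all eigenvectors of a symmetric matrix `M` whose eigenvalue is farther than
`β` from the reference value `c`. -/
def eigSpanFar {n : ℕ} (M : Matrix (Fin n) (Fin n) ℝ) (c β : ℝ) :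
    Submodule ℝ (EuclideanSpace ℝ (Fin n)) :=
  ⨆ lam ∈ {l : ℝ | β < |l - c|}, Module.End.eigenspace (Matrix.toEuclideanLin M) lam



/-! ### Auxiliary lemmas -/

section AuxRot

lemma myRot_lintegral_pi_prod {n : ℕ} (μ : Fin n → Measure ℝ) [∀ i, SigmaFinite (μ i)]
    (f : Fin n → ℝ → ℝ≥0∞) (hf : ∀ i, Measurable (f i)) :
    ∫⁻ x, ∏ i, f i (x i) ∂Measure.pi μ = ∏ i, ∫⁻ t, f i t ∂μ i := by
  induction n with
  | zero => simp [Measure.pi_of_empty]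
  | succ n ih =>
      have h := (measurePreserving_piFinSuccAbove μ 0)
      set g : (Fin n → ℝ) → ℝ≥0∞ := fun v => ∏ i, f (Fin.succ i) (v i) with hg
      have hgm : Measurable g :=
        Finset.measurable_prod _ fun i _ => (hf _).comp (measurable_pi_apply i)
      have hG : Measurable fun y : ℝ × (Fin n → ℝ) => f 0 y.1 * g y.2 :=
        ((hf 0).comp measurable_fst).mul (hgm.comp measurable_snd)
      have key : ∫⁻ x, ∏ i, f i (x i) ∂Measure.pi μ
          = ∫⁻ y : ℝ × (Fin n → ℝ), f 0 y.1 * g y.2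
              ∂((μ 0).prod (Measure.pi fun i => μ (Fin.succAbove 0 i))) := by
        rw [← h.lintegral_comp hG]
        congr 1
        funext x
        simp [MeasurableEquiv.piFinSuccAbove_apply, Fin.prod_univ_succ, Fin.zero_succAbove, hg,
          Fin.tail]
      rw [key, lintegral_prod_mul ((hf 0).aemeasurable) hgm.aemeasurable, hg]
      rw [ih _ _ fun i => hf _, Fin.prod_univ_succ]
      simp [Fin.zero_succAbove]

lemma myRot_pi_gaussian_eq (n : ℕ) :
    Measure.pi (fun _ : Fin n => gaussianReal 0 1) =
      (volume : Measure (Fin n → ℝ)).withDensity fun x => ∏ i, gaussianPDF 0 1 (x i) := by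
  refine Measure.pi_eq fun s hs => ?_
  rw [withDensity_apply _ (MeasurableSet.univ_pi hs)]
  have h1 : ∫⁻ x in Set.pi Set.univ s, ∏ i, gaussianPDF 0 1 (x i) ∂(volume : Measure (Fin n → ℝ))
      = ∫⁻ x, ∏ i, (s i).indicator (gaussianPDF 0 1) (x i) ∂(volume : Measure (Fin n → ℝ)) := by
    rw [← lintegral_indicator (MeasurableSet.univ_pi hs) _]
    congr 1
    funext x
    by_cases hx : x ∈ Set.pi Set.univ s
    · rw [Set.indicator_of_mem hx]
      exact (Finset.prod_congr rfl fun i _ => (Set.indicator_of_mem (hx i trivial) _)).symm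
    · rw [Set.indicator_of_notMem hx]
      have : ∃ i, x i ∉ s i := by
        by_contra h
        push_neg at h
        exact hx fun i _ => h i
      obtain ⟨i, hi⟩ := this
      exact (Finset.prod_eq_zero (Finset.mem_univ i) (Set.indicator_of_notMem hi _)).symm
  rw [h1, volume_pi, myRot_lintegral_pi_prod _ _
    (fun i => (measurable_gaussianPDF 0 1).indicator (hs i))]
  exact Finset.prod_congr rfl fun i _ => by
    rw [lintegral_indicator (hs i) _, ← gaussianReal_apply 0 one_ne_zero (s i)]

lemma myRot_map_withDensity_me {α β : Type*} [MeasurableSpace α] [MeasurableSpace β]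
    (e : α ≃ᵐ β) (μ : Measure α) (D : β → ℝ≥0∞) (hD : Measurable D) :
    Measure.map e (μ.withDensity (fun a => D (e a))) = (Measure.map e μ).withDensity D := by
  ext A hA
  rw [Measure.map_apply e.measurable hA, withDensity_apply _ hA,
    withDensity_apply _ (e.measurable hA), setLIntegral_map hA hD e.measurable]

lemma myRot_stdGaussian_eq_withDensity (n : ℕ) :
    stdGaussian n = (volume : Measure (EuclideanSpace ℝ (Fin n))).withDensity
      (fun x => ENNReal.ofReal ((Real.sqrt (2 * π))⁻¹ ^ n * Real.exp (-‖x‖ ^ 2 / 2))) := by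
  have hcoe : ⇑(EuclideanSpace.equiv (Fin n) ℝ).symm
      = ⇑(MeasurableEquiv.toLp 2 (Fin n → ℝ)) := rfl
  set D : EuclideanSpace ℝ (Fin n) → ℝ≥0∞ :=
    fun x => ENNReal.ofReal ((Real.sqrt (2 * π))⁻¹ ^ n * Real.exp (-‖x‖ ^ 2 / 2)) with hDdef
  have hD : Measurable D := by
    apply Measurable.ennreal_ofReal
    exact (measurable_const.mul (((measurable_norm.pow measurable_const).neg.div
      measurable_const).exp))
  have hDcomp : ∀ x : Fin n → ℝ, (∏ i, gaussianPDF 0 1 (x i))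
      = D ((MeasurableEquiv.toLp 2 (Fin n → ℝ)) x) := by
    intro x
    have hnorm : ‖(MeasurableEquiv.toLp 2 (Fin n → ℝ)) x‖ ^ 2 = ∑ i, (x i) ^ 2 := by
      rw [EuclideanSpace.norm_eq]
      rw [Real.sq_sqrt (by positivity)]
      simp [MeasurableEquiv.coe_toLp, Real.norm_eq_abs, sq_abs]
    rw [hDdef]
    simp only [hnorm]
    simp only [gaussianPDF]
    rw [← ENNReal.ofReal_prod_of_nonneg (fun i _ => gaussianPDFReal_nonneg 0 1 (x i))]
    congr 1
    have : ∀ i, gaussianPDFReal 0 1 (x i)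
        = (Real.sqrt (2 * π))⁻¹ * Real.exp (-(x i) ^ 2 / 2) := by
      intro i
      rw [gaussianPDFReal]
      norm_num
    rw [Finset.prod_congr rfl fun i _ => this i, Finset.prod_mul_distrib]
    rw [Finset.prod_const, ← Real.exp_sum]
    congr 1
    · simp
    · rw [← Finset.sum_div, ← Finset.sum_neg_distrib]
  calc stdGaussian n
      = Measure.map (MeasurableEquiv.toLp 2 (Fin n → ℝ))
          ((volume : Measure (Fin n → ℝ)).withDensity fun x => ∏ i, gaussianPDF 0 1 (x i)) := by
        rw [_root_.stdGaussian, myRot_pi_gaussian_eq, hcoe]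
    _ = Measure.map (MeasurableEquiv.toLp 2 (Fin n → ℝ))
          ((volume : Measure (Fin n → ℝ)).withDensity
            fun x => D ((MeasurableEquiv.toLp 2 (Fin n → ℝ)) x)) := by
        congr 1
        exact congrArg _ (funext fun x => hDcomp x)
    _ = (Measure.map (MeasurableEquiv.toLp 2 (Fin n → ℝ)) volume).withDensity D :=
        myRot_map_withDensity_me _ _ D hD
    _ = (volume : Measure (EuclideanSpace ℝ (Fin n))).withDensity D := by
        rw [MeasurableEquiv.coe_toLp, (PiLp.volume_preserving_toLp (ι := Fin n)).map_eq]

lemma myRot_stdGaussian_map_isometry {n : ℕ}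
    (O : EuclideanSpace ℝ (Fin n) ≃ₗᵢ[ℝ] EuclideanSpace ℝ (Fin n)) :
    Measure.map O (stdGaussian n) = stdGaussian n := by
  rw [myRot_stdGaussian_eq_withDensity]
  set D : EuclideanSpace ℝ (Fin n) → ℝ≥0∞ :=
    fun x => ENNReal.ofReal ((Real.sqrt (2 * π))⁻¹ ^ n * Real.exp (-‖x‖ ^ 2 / 2)) with hDdef
  have hD : Measurable D := by
    apply Measurable.ennreal_ofReal
    exact (measurable_const.mul (((measurable_norm.pow measurable_const).neg.div
      measurable_const).exp))
  have hcoe : ⇑O = ⇑O.toMeasurableEquiv := rfl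
  have h1 : (fun x => D (O.toMeasurableEquiv x)) = D := by
    funext x
    simp only [hDdef, LinearIsometryEquiv.coe_toMeasurableEquiv, LinearIsometryEquiv.norm_map]
  calc Measure.map O (volume.withDensity D)
      = Measure.map O.toMeasurableEquiv (volume.withDensity fun x => D (O.toMeasurableEquiv x)) := by
        rw [hcoe, h1]
    _ = (Measure.map O.toMeasurableEquiv volume).withDensity D := myRot_map_withDensity_me _ _ D hD
    _ = volume.withDensity D := by
        rw [show ⇑O.toMeasurableEquiv = ⇑O from rfl, O.measurePreserving.map_eq]

lemma myRot_measurable_normalize (n : ℕ) :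
    Measurable fun x : EuclideanSpace ℝ (Fin n) => ‖x‖⁻¹ • x :=
  (measurable_norm.inv).smul measurable_id

instance myRot_stdGaussian_prob (n : ℕ) : IsProbabilityMeasure (stdGaussian n) := by
  rw [_root_.stdGaussian]
  exact Measure.isProbabilityMeasure_map (Measurable.aemeasurable (by
    exact (MeasurableEquiv.toLp 2 (Fin n → ℝ)).measurable))

instance myRot_sphereUniform_prob (n : ℕ) : IsProbabilityMeasure (sphereUniform n) := by
  rw [sphereUniform]
  exact Measure.isProbabilityMeasure_map (myRot_measurable_normalize n).aemeasurable

lemma myRot_stdGaussian_zero {n : ℕ} (hn : 0 < n) : stdGaussian n ({0} : Set _) = 0 := by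
  rw [_root_.stdGaussian]
  rw [show (⇑(EuclideanSpace.equiv (Fin n) ℝ).symm)
      = ⇑(MeasurableEquiv.toLp 2 (Fin n → ℝ)) from rfl]
  rw [Measure.map_apply (MeasurableEquiv.toLp 2 (Fin n → ℝ)).measurable
    (measurableSet_singleton 0)]
  rw [show (⇑(MeasurableEquiv.toLp 2 (Fin n → ℝ)))
      = ⇑(EuclideanSpace.equiv (Fin n) ℝ).symm from rfl]
  have : (⇑(EuclideanSpace.equiv (Fin n) ℝ).symm) ⁻¹' {0}
      = Set.pi Set.univ fun _ => ({0} : Set ℝ) := by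
    ext x
    simp only [Set.mem_preimage, Set.mem_singleton_iff, Set.mem_pi, Set.mem_univ, true_implies]
    constructor
    · intro h i
      have := congrFun (congrArg (fun y : EuclideanSpace ℝ (Fin n) => (y : Fin n → ℝ)) h) i
      exact this
    · intro h
      ext i
      exact h i
  rw [this, Measure.pi_pi]
  have h0 : gaussianReal 0 1 ({0} : Set ℝ) = 0 := by
    rw [gaussianReal_apply 0 one_ne_zero]
    exact setLIntegral_measure_zero _ _ (measure_singleton 0)
  rw [Finset.prod_eq_zero (Finset.mem_univ (⟨0, hn⟩ : Fin n)) h0]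

lemma myRot_sphereUniform_ae_norm {n : ℕ} (hn : 0 < n) :
    ∀ᵐ θ ∂(sphereUniform n), ‖θ‖ = 1 := by
  rw [sphereUniform, ae_map_iff (myRot_measurable_normalize n).aemeasurable]
  · have : {x : EuclideanSpace ℝ (Fin n) | ‖‖x‖⁻¹ • x‖ = 1} ⊇ {0}ᶜ := by
      intro x hx
      have hx0 : x ≠ 0 := hx
      simp only [Set.mem_setOf_eq, norm_smul, norm_inv, norm_norm]
      rw [inv_mul_cancel₀ (norm_ne_zero_iff.mpr hx0)]
    refine Filter.Eventually.mono ?_ (fun x hx => this hx)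
    rw [ae_iff]
    simpa using myRot_stdGaussian_zero hn
  · exact measurableSet_eq_fun measurable_norm measurable_const

lemma myRot_sphereUniform_map_isometry {n : ℕ}
    (O : EuclideanSpace ℝ (Fin n) ≃ₗᵢ[ℝ] EuclideanSpace ℝ (Fin n)) :
    Measure.map O (sphereUniform n) = sphereUniform n := by
  have hOm : Measurable ⇑O := O.continuous.measurable
  rw [sphereUniform, Measure.map_map hOm (myRot_measurable_normalize n)]
  have : (⇑O ∘ fun x : EuclideanSpace ℝ (Fin n) => ‖x‖⁻¹ • x)
      = (fun x => ‖x‖⁻¹ • x) ∘ ⇑O := by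
    funext x
    simp only [Function.comp_apply, LinearIsometryEquiv.map_smul, LinearIsometryEquiv.norm_map]
  rw [this, ← Measure.map_map (myRot_measurable_normalize n) hOm,
    myRot_stdGaussian_map_isometry O]

lemma myRot_sphere_int_isom {n : ℕ} (r : ℕ)
    (O : EuclideanSpace ℝ (Fin n) ≃ₗᵢ[ℝ] EuclideanSpace ℝ (Fin n))
    (u : EuclideanSpace ℝ (Fin n)) :
    ∫ θ, ⟪O u, θ⟫ ^ r ∂(sphereUniform n) = ∫ θ, ⟪u, θ⟫ ^ r ∂(sphereUniform n) := by
  have hOm : Measurable ⇑O := O.continuous.measurable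
  have hcont : AEStronglyMeasurable (fun θ : EuclideanSpace ℝ (Fin n) => ⟪O u, θ⟫ ^ r)
      (Measure.map (⇑O) (sphereUniform n)) :=
    ((continuous_const.inner continuous_id).pow r).aestronglyMeasurable
  calc ∫ θ, ⟪O u, θ⟫ ^ r ∂(sphereUniform n)
      = ∫ θ, ⟪O u, θ⟫ ^ r ∂(Measure.map (⇑O) (sphereUniform n)) := by
        rw [myRot_sphereUniform_map_isometry O]
    _ = ∫ θ, ⟪O u, O θ⟫ ^ r ∂(sphereUniform n) := integral_map hOm.aemeasurable hcont
    _ = ∫ θ, ⟪u, θ⟫ ^ r ∂(sphereUniform n) := by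
        congr 1
        funext θ
        rw [LinearIsometryEquiv.inner_map_map]

lemma myRot_sphere_int_rot {n : ℕ} (r : ℕ) {u v : EuclideanSpace ℝ (Fin n)}
    (hu : ‖u‖ = 1) (hv : ‖v‖ = 1) :
    ∫ θ, ⟪u, θ⟫ ^ r ∂(sphereUniform n) = ∫ θ, ⟪v, θ⟫ ^ r ∂(sphereUniform n) := by
  have hOu : Submodule.reflection (ℝ ∙ (v - u))ᗮ v = u := Submodule.reflection_sub (hv.trans hu.symm)
  rw [← hOu]
  exact myRot_sphere_int_isom r _ v

lemma myRot_sphere_int_scale {n : ℕ} (r : ℕ) (hr : 0 < r) {u : EuclideanSpace ℝ (Fin n)}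
    (hu : ‖u‖ = 1) (x : EuclideanSpace ℝ (Fin n)) :
    ∫ θ, ⟪x, θ⟫ ^ r ∂(sphereUniform n)
      = ‖x‖ ^ r * ∫ θ, ⟪u, θ⟫ ^ r ∂(sphereUniform n) := by
  by_cases hx : x = 0
  · simp [hx, zero_pow hr.ne', inner_zero_left]
  · have hxn : ‖x‖ ≠ 0 := norm_ne_zero_iff.mpr hx
    have hunit : ‖(‖x‖⁻¹ • x)‖ = 1 := by
      rw [norm_smul, norm_inv, norm_norm, inv_mul_cancel₀ hxn]
    have h1 : ∀ θ : EuclideanSpace ℝ (Fin n), ⟪x, θ⟫ ^ r = ‖x‖ ^ r * ⟪‖x‖⁻¹ • x, θ⟫ ^ r := by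
      intro θ
      rw [real_inner_smul_left, mul_pow, ← mul_assoc, ← mul_pow, mul_inv_cancel₀ hxn, one_pow,
        one_mul]
    simp_rw [h1]
    rw [integral_const_mul, myRot_sphere_int_rot r hunit hu]

lemma myRot_coord_abs_le_norm {n : ℕ} (x : EuclideanSpace ℝ (Fin n)) (i : Fin n) :
    |x i| ≤ ‖x‖ := by
  have h := abs_real_inner_le_norm (EuclideanSpace.single i (1 : ℝ)) x
  rw [EuclideanSpace.inner_single_left] at h
  simpa [EuclideanSpace.norm_single] using h

lemma myRot_measurable_coord {n : ℕ} (i : Fin n) :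
    Measurable fun x : EuclideanSpace ℝ (Fin n) => x i :=
  (measurable_pi_apply i).comp (WithLp.measurable_ofLp 2 _)

lemma myRot_integrable_coord_prod {n r : ℕ} (ξ : Measure (EuclideanSpace ℝ (Fin n)))
    (hξ : Integrable (fun x => ‖x‖ ^ r) ξ) (idx : Fin r → Fin n) :
    Integrable (fun x => ∏ j, x (idx j)) ξ := by
  refine Integrable.mono' hξ ?_ (ae_of_all _ fun x => ?_)
  · exact (Finset.measurable_prod _ fun j _ => myRot_measurable_coord (idx j)).aestronglyMeasurable
  · rw [Real.norm_eq_abs, Finset.abs_prod]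
    calc ∏ j, |x (idx j)| ≤ ∏ _j : Fin r, ‖x‖ :=
          Finset.prod_le_prod (fun j _ => abs_nonneg _)
            fun j _ => myRot_coord_abs_le_norm x (idx j)
    _ = ‖x‖ ^ r := by rw [Finset.prod_const, Finset.card_univ, Fintype.card_fin]

lemma myRot_pairing_lemma {n : ℕ} (r : ℕ) (ξ₁ ξ₂ : Measure (EuclideanSpace ℝ (Fin n)))
    [IsProbabilityMeasure ξ₁] [IsProbabilityMeasure ξ₂]
    (h₁ : Integrable (fun x => ‖x‖ ^ r) ξ₁) (h₂ : Integrable (fun x => ‖x‖ ^ r) ξ₂) :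
    ∫ p, ⟪p.1, p.2⟫ ^ r ∂(ξ₁.prod ξ₂)
      = ∑ idx : Fin r → Fin n,
          (∫ x, ∏ j, x (idx j) ∂ξ₁) * (∫ x, ∏ j, x (idx j) ∂ξ₂) := by
  have hexp : ∀ p : EuclideanSpace ℝ (Fin n) × EuclideanSpace ℝ (Fin n),
      ⟪p.1, p.2⟫ ^ r = ∑ idx : Fin r → Fin n,
        (∏ j, p.1 (idx j)) * (∏ j, p.2 (idx j)) := by
    intro p
    have : ⟪p.1, p.2⟫ = ∑ i, p.1 i * p.2 i := by
      simp [PiLp.inner_apply, RCLike.inner_apply, conj_trivial]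
      exact Finset.sum_congr rfl fun i _ => mul_comm _ _
    rw [this, Fintype.sum_pow]
    exact Finset.sum_congr rfl fun idx _ => by rw [← Finset.prod_mul_distrib]
  simp_rw [hexp]
  rw [integral_finset_sum _ fun idx _ =>
    (myRot_integrable_coord_prod ξ₁ h₁ idx).mul_prod (myRot_integrable_coord_prod ξ₂ h₂ idx)]
  exact Finset.sum_congr rfl fun idx _ =>
    integral_prod_mul (f := fun x : EuclideanSpace ℝ (Fin n) => ∏ j, x (idx j))
      (g := fun x : EuclideanSpace ℝ (Fin n) => ∏ j, x (idx j))

end AuxRot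

set_option maxHeartbeats 1000000 in
/-- **Minimization.**  With `X'` an independent copy of `X` and `X_rot, X_rot'` independent
copies of the rotational symmetrization of `X` (all with finite moments of all orders),
`E[⟨X,X'⟩^r] ≥ E[⟨X_rot, X_rot'⟩^r]` for every positive integer `r`. -/
theorem inner_moment_minimization
    {Ω : Type*} [MeasurableSpace Ω] (P : Measure Ω) [IsProbabilityMeasure P]
    {n : ℕ} (X X' Xrot Xrot' : Ω → EuclideanSpace ℝ (Fin n))
    (hX : Measurable X) (hX' : Measurable X') (hXr : Measurable Xrot) (hXr' : Measurable Xrot')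
    (hcopy : Measure.map X' P = Measure.map X P)
    (hindep : IndepFun X X' P)
    (hrot : Measure.map Xrot P = rotSymMeas (Measure.map X P))
    (hrot' : Measure.map Xrot' P = rotSymMeas (Measure.map X P))
    (hindeprot : IndepFun Xrot Xrot' P)
    (hmom : ∀ k : ℕ, Integrable (fun ω => ‖X ω‖ ^ k) P)
    (r : ℕ) (hr : 0 < r) :
    (∫ ω, ⟪Xrot ω, Xrot' ω⟫ ^ r ∂P) ≤ ∫ ω, ⟪X ω, X' ω⟫ ^ r ∂P := by
  rcases Nat.eq_zero_or_pos n with hn | hn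
  · subst hn
    have h0 : ∀ x y : EuclideanSpace ℝ (Fin 0), ⟪x, y⟫ = (0 : ℝ) := by
      intro x y
      simp [PiLp.inner_apply]
    simp only [h0, zero_pow hr.ne', integral_zero, le_refl]
  set μ := Measure.map X P with hμ
  haveI hμprob : IsProbabilityMeasure μ := Measure.isProbabilityMeasure_map hX.aemeasurable
  set ν : Measure ℝ := μ.map (fun x => ‖x‖) with hν
  haveI hνprob : IsProbabilityMeasure ν := Measure.isProbabilityMeasure_map measurable_norm.aemeasurable
  set σ := sphereUniform n with hσ
  have hsmul : Measurable fun p : ℝ × EuclideanSpace ℝ (Fin n) => p.1 • p.2 :=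
    measurable_fst.smul measurable_snd
  set ρ := rotSymMeas μ with hρ
  have hρmap : ρ = Measure.map (fun p : ℝ × EuclideanSpace ℝ (Fin n) => p.1 • p.2) (ν.prod σ) :=
    rfl
  haveI hρprob : IsProbabilityMeasure ρ := by
    rw [hρmap]
    exact Measure.isProbabilityMeasure_map hsmul.aemeasurable
  -- moments of μ
  have hmomμ : ∀ k : ℕ, Integrable (fun x : EuclideanSpace ℝ (Fin n) => ‖x‖ ^ k) μ := by
    intro k
    rw [hμ, integrable_map_measure (measurable_norm.pow_const k).aestronglyMeasurable
      hX.aemeasurable]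
    exact hmom k
  have hνint : ∀ k : ℕ, Integrable (fun t : ℝ => |t| ^ k) ν := by
    intro k
    rw [hν, integrable_map_measure ((measurable_abs.pow_const k)).aestronglyMeasurable
      measurable_norm.aemeasurable]
    have : ((fun t : ℝ => |t| ^ k) ∘ fun x : EuclideanSpace ℝ (Fin n) => ‖x‖)
        = fun x => ‖x‖ ^ k := by
      funext x
      simp [abs_norm]
    rw [this]
    exact hmomμ k
  have hνid : ∀ k : ℕ, ∫ t, t ^ k ∂ν = ∫ x, ‖x‖ ^ k ∂μ := by
    intro k
    rw [hν]
    exact integral_map (f := fun t : ℝ => t ^ k) measurable_norm.aemeasurable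
      (Measurable.aestronglyMeasurable (by measurability))
  have hνabs : ∫ t, |t| ^ r ∂ν = ∫ x, ‖x‖ ^ r ∂μ := by
    rw [hν, integral_map measurable_norm.aemeasurable
      ((measurable_abs.pow_const r)).aestronglyMeasurable]
    simp [abs_norm]
  have hσnorm : ∀ᵐ θ ∂σ, ‖θ‖ = 1 := myRot_sphereUniform_ae_norm hn
  have hσint : ∀ k : ℕ, Integrable (fun θ : EuclideanSpace ℝ (Fin n) => ‖θ‖ ^ k) σ := by
    intro k
    refine Integrable.mono' (integrable_const 1)
      ((measurable_norm.pow_const k).aestronglyMeasurable) ?_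
    filter_upwards [hσnorm] with θ hθ
    rw [Real.norm_eq_abs, abs_pow, abs_norm, hθ, one_pow]
  have hσone : ∫ θ, ‖θ‖ ^ r ∂σ = 1 := by
    have : ∫ θ, ‖θ‖ ^ r ∂σ = ∫ _θ, (1 : ℝ) ∂σ := by
      refine integral_congr_ae ?_
      filter_upwards [hσnorm] with θ hθ
      rw [hθ, one_pow]
    rw [this]
    simp
  -- moments of ρ
  have hρnormint : ∀ k : ℕ, Integrable (fun y : EuclideanSpace ℝ (Fin n) => ‖y‖ ^ k) ρ := by
    intro k
    rw [hρmap, integrable_map_measure (measurable_norm.pow_const k).aestronglyMeasurable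
      hsmul.aemeasurable]
    have heq : ((fun y : EuclideanSpace ℝ (Fin n) => ‖y‖ ^ k)
        ∘ fun p : ℝ × EuclideanSpace ℝ (Fin n) => p.1 • p.2)
        = fun p : ℝ × EuclideanSpace ℝ (Fin n) => |p.1| ^ k * ‖p.2‖ ^ k := by
      funext p
      simp [Function.comp, norm_smul, mul_pow, Real.norm_eq_abs]
    rw [heq]
    exact (hνint k).mul_prod (hσint k)
  have hρnormr : ∫ y, ‖y‖ ^ r ∂ρ = ∫ x, ‖x‖ ^ r ∂μ := by
    rw [hρmap, integral_map hsmul.aemeasurable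
      (measurable_norm.pow_const r).aestronglyMeasurable]
    have heq : ∀ p : ℝ × EuclideanSpace ℝ (Fin n),
        ‖p.1 • p.2‖ ^ r = |p.1| ^ r * ‖p.2‖ ^ r := by
      intro p
      rw [norm_smul, mul_pow, Real.norm_eq_abs]
    simp_rw [heq]
    rw [integral_prod_mul (f := fun t : ℝ => |t| ^ r)
      (g := fun θ : EuclideanSpace ℝ (Fin n) => ‖θ‖ ^ r), hσone, hνabs, mul_one]
  -- the unit vector and κ
  set u : EuclideanSpace ℝ (Fin n) := EuclideanSpace.single (⟨0, hn⟩ : Fin n) (1 : ℝ) with hudef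
  have hu : ‖u‖ = 1 := by simp [hudef, EuclideanSpace.norm_single]
  set κ : ℝ := ∫ θ, ⟪u, θ⟫ ^ r ∂σ with hκ
  set S : ℝ := ∫ x, ‖x‖ ^ r ∂μ with hS
  -- inner integral against ρ
  have hInner : ∀ x : EuclideanSpace ℝ (Fin n),
      ∫ y, ⟪x, y⟫ ^ r ∂ρ = S * (‖x‖ ^ r * κ) := by
    intro x
    have hcont : AEStronglyMeasurable (fun y : EuclideanSpace ℝ (Fin n) => ⟪x, y⟫ ^ r)
        (Measure.map (fun p : ℝ × EuclideanSpace ℝ (Fin n) => p.1 • p.2) (ν.prod σ)) :=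
      ((continuous_const.inner continuous_id).pow r).aestronglyMeasurable
    rw [hρmap, integral_map hsmul.aemeasurable hcont]
    have heq : ∀ p : ℝ × EuclideanSpace ℝ (Fin n),
        ⟪x, p.1 • p.2⟫ ^ r = p.1 ^ r * ⟪x, p.2⟫ ^ r := by
      intro p
      rw [real_inner_smul_right, mul_pow]
    simp_rw [heq]
    rw [integral_prod_mul (f := fun t : ℝ => t ^ r)
      (g := fun θ : EuclideanSpace ℝ (Fin n) => ⟪x, θ⟫ ^ r), hνid r,
      myRot_sphere_int_scale r hr hu x]
  -- integrability on product spaces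
  have hIntPair : ∀ (ξ₁ ξ₂ : Measure (EuclideanSpace ℝ (Fin n)))
      [IsProbabilityMeasure ξ₁] [IsProbabilityMeasure ξ₂],
      Integrable (fun x => ‖x‖ ^ r) ξ₁ → Integrable (fun x => ‖x‖ ^ r) ξ₂ →
      Integrable (fun p : EuclideanSpace ℝ (Fin n) × EuclideanSpace ℝ (Fin n) => ⟪p.1, p.2⟫ ^ r)
        (ξ₁.prod ξ₂) := by
    intro ξ₁ ξ₂ _ _ h1 h2
    refine Integrable.mono' (h1.mul_prod h2)
      (((continuous_fst.inner continuous_snd).pow r).aestronglyMeasurable)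
      (ae_of_all _ fun p => ?_)
    rw [Real.norm_eq_abs, abs_pow]
    calc |⟪p.1, p.2⟫| ^ r ≤ (‖p.1‖ * ‖p.2‖) ^ r :=
          pow_le_pow_left₀ (abs_nonneg _) (abs_real_inner_le_norm _ _) r
    _ = ‖p.1‖ ^ r * ‖p.2‖ ^ r := mul_pow _ _ _
  -- I3 = I2
  have hI3 : ∫ p, ⟪p.1, p.2⟫ ^ r ∂(μ.prod ρ) = S * (S * κ) := by
    rw [integral_prod _ (hIntPair μ ρ (hmomμ r) (hρnormint r))]
    simp_rw [hInner]
    rw [integral_const_mul]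
    congr 1
    have : ∀ x : EuclideanSpace ℝ (Fin n), ‖x‖ ^ r * κ = κ * ‖x‖ ^ r := fun x => mul_comm _ _
    simp_rw [this]
    rw [integral_const_mul, ← hS, mul_comm]
  have hI2 : ∫ p, ⟪p.1, p.2⟫ ^ r ∂(ρ.prod ρ) = S * (S * κ) := by
    rw [integral_prod _ (hIntPair ρ ρ (hρnormint r) (hρnormint r))]
    simp_rw [hInner]
    rw [integral_const_mul]
    congr 1
    have : ∀ x : EuclideanSpace ℝ (Fin n), ‖x‖ ^ r * κ = κ * ‖x‖ ^ r := fun x => mul_comm _ _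
    simp_rw [this]
    rw [integral_const_mul, hρnormr]
    ring
  -- pairing
  have hP1 := myRot_pairing_lemma r μ μ (hmomμ r) (hmomμ r)
  have hP2 := myRot_pairing_lemma r ρ ρ (hρnormint r) (hρnormint r)
  have hP3 := myRot_pairing_lemma r μ ρ (hmomμ r) (hρnormint r)
  -- the moment vectors
  set M : EuclideanSpace ℝ (Fin r → Fin n) :=
    WithLp.toLp 2 (fun idx => ∫ x, ∏ j, x (idx j) ∂μ : (Fin r → Fin n) → ℝ) with hM
  set M' : EuclideanSpace ℝ (Fin r → Fin n) :=
    WithLp.toLp 2 (fun idx => ∫ x, ∏ j, x (idx j) ∂ρ : (Fin r → Fin n) → ℝ) with hM'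
  have hinnMM : ⟪M, M⟫ = ∑ idx : Fin r → Fin n,
      (∫ x, ∏ j, x (idx j) ∂μ) * (∫ x, ∏ j, x (idx j) ∂μ) := by
    rw [PiLp.inner_apply]
    simp [PiLp.inner_apply, RCLike.inner_apply, conj_trivial, hM]
    exact Finset.sum_congr rfl fun i _ => sq _
  have hinnMM' : ⟪M, M'⟫ = ∑ idx : Fin r → Fin n,
      (∫ x, ∏ j, x (idx j) ∂μ) * (∫ x, ∏ j, x (idx j) ∂ρ) := by
    simp [PiLp.inner_apply, RCLike.inner_apply, conj_trivial, hM, hM']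
    exact Finset.sum_congr rfl fun i _ => mul_comm _ _
  have hinnM'M' : ⟪M', M'⟫ = ∑ idx : Fin r → Fin n,
      (∫ x, ∏ j, x (idx j) ∂ρ) * (∫ x, ∏ j, x (idx j) ∂ρ) := by
    rw [PiLp.inner_apply]
    simp [PiLp.inner_apply, RCLike.inner_apply, conj_trivial, hM']
    exact Finset.sum_congr rfl fun i _ => sq _
  -- key inequality
  have hkey : ∫ p, ⟪p.1, p.2⟫ ^ r ∂(ρ.prod ρ) ≤ ∫ p, ⟪p.1, p.2⟫ ^ r ∂(μ.prod μ) := by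
    have heq1 : ∫ p, ⟪p.1, p.2⟫ ^ r ∂(ρ.prod ρ) = ⟪M', M'⟫ := by rw [hP2, hinnM'M']
    have heq2 : ∫ p, ⟪p.1, p.2⟫ ^ r ∂(μ.prod μ) = ⟪M, M⟫ := by rw [hP1, hinnMM]
    have heq3 : ⟪M', M'⟫ = ⟪M, M'⟫ := by
      rw [hinnM'M', hinnMM']
      rw [← hP2, ← hP3, hI2, hI3]
    rw [heq1, heq2]
    have hcs : ⟪M, M'⟫ ≤ ‖M‖ * ‖M'‖ := real_inner_le_norm M M'
    have h1 : ⟪M', M'⟫ = ‖M'‖ ^ 2 := real_inner_self_eq_norm_sq M'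
    have h2 : ⟪M, M⟫ = ‖M‖ ^ 2 := real_inner_self_eq_norm_sq M
    rw [h1, h2]
    have hle : ‖M'‖ ^ 2 ≤ ‖M‖ * ‖M'‖ := by
      rw [← h1, heq3]
      exact hcs
    have hM'nn : (0 : ℝ) ≤ ‖M'‖ := norm_nonneg _
    have hMnn : (0 : ℝ) ≤ ‖M‖ := norm_nonneg _
    rcases eq_or_lt_of_le hM'nn with h0 | hpos
    · rw [← h0]
      simpa using sq_nonneg ‖M‖
    · have hle' : ‖M'‖ ≤ ‖M‖ := by
        have h' : ‖M'‖ * ‖M'‖ ≤ ‖M‖ * ‖M'‖ := by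
          calc ‖M'‖ * ‖M'‖ = ‖M'‖ ^ 2 := (sq ‖M'‖).symm
          _ ≤ ‖M‖ * ‖M'‖ := hle
        exact le_of_mul_le_mul_right h' hpos
      exact pow_le_pow_left₀ hM'nn hle' 2
  -- reduce the statement to product measures
  have hcontp : AEStronglyMeasurable
      (fun p : EuclideanSpace ℝ (Fin n) × EuclideanSpace ℝ (Fin n) => ⟪p.1, p.2⟫ ^ r)
      (μ.prod μ) :=
    ((continuous_fst.inner continuous_snd).pow r).aestronglyMeasurable
  have hmapXX : Measure.map (fun ω => (X ω, X' ω)) P = μ.prod μ := by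
    rw [(indepFun_iff_map_prod_eq_prod_map_map hX.aemeasurable hX'.aemeasurable).mp hindep,
      hcopy]
  have hmapRR : Measure.map (fun ω => (Xrot ω, Xrot' ω)) P = ρ.prod ρ := by
    rw [(indepFun_iff_map_prod_eq_prod_map_map hXr.aemeasurable hXr'.aemeasurable).mp hindeprot,
      hrot, hrot']
  have hred1 : ∫ ω, ⟪X ω, X' ω⟫ ^ r ∂P = ∫ p, ⟪p.1, p.2⟫ ^ r ∂(μ.prod μ) := by
    rw [← hmapXX, integral_map (hX.prodMk hX').aemeasurable
      (((continuous_fst.inner continuous_snd).pow r).aestronglyMeasurable)]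
  have hred2 : ∫ ω, ⟪Xrot ω, Xrot' ω⟫ ^ r ∂P = ∫ p, ⟪p.1, p.2⟫ ^ r ∂(ρ.prod ρ) := by
    rw [← hmapRR, integral_map (hXr.prodMk hXr').aemeasurable
      (((continuous_fst.inner continuous_snd).pow r).aestronglyMeasurable)]
  rw [hred1, hred2]
  exact hkey

end
end

section
/- Let X be a random vector in ℝⁿ, n ≥ 2, with finite moments of all orders, and let g be a standard gaussian vector in ℝⁿ. Suppose there is a unit vector v ∈ S^{n-1}, an even integer r ≥ 2, and 0 < δ ≤ 1 such that |E[⟨X,v⟩^r] − E[⟨g,v⟩^r]| ≥ δ·E[⟨g,v⟩^r]. Then either |E[‖X‖₂^r] − E[‖g‖₂^r]| ≥ (δ²/4)·E[⟨g,v⟩^r], or |E[⟨X,X'⟩^r] − E[⟨g,g'⟩^r]| ≥ (15δ²/64)·(E[⟨g,v⟩^r])², where X', g' are independent copies of X, g respectively. -/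
open MeasureTheory ProbabilityTheory Real
open scoped RealInnerProductSpace ENNReal

noncomputable section

variable {Ω : Type*} [MeasurableSpace Ω]

namespace CompAux


lemma lintegral_pi_prod : ∀ (n : ℕ) (μ : Fin n → Measure ℝ), (∀ i, SigmaFinite (μ i)) →
    ∀ (f : Fin n → ℝ → ℝ≥0∞), (∀ i, Measurable (f i)) →
    ∫⁻ y, ∏ i, f i (y i) ∂Measure.pi μ = ∏ i, ∫⁻ t, f i t ∂μ i := by
  intro n
  induction n with
  | zero => intro μ _ f hf; simp [lintegral_const, Measure.pi_univ]
  | succ n ih =>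
    intro μ hσ f hf
    haveI := hσ
    have hmp := measurePreserving_piFinSuccAbove μ 0
    have hmeas : Measurable fun p : ℝ × (Fin n → ℝ) =>
        f 0 p.1 * ∏ j : Fin n, f (Fin.succ j) (p.2 j) := by
      refine ((hf 0).comp measurable_fst).mul ?_
      exact Finset.measurable_prod _ fun j _ => (hf _).comp ((measurable_pi_apply j).comp measurable_snd)
    calc ∫⁻ y, ∏ i, f i (y i) ∂Measure.pi μ
        = ∫⁻ y, f 0 (y 0) * ∏ j : Fin n, f (Fin.succ j) (y (Fin.succ j)) ∂Measure.pi μ := by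
          simp_rw [Fin.prod_univ_succ]
      _ = ∫⁻ p : ℝ × (Fin n → ℝ), f 0 p.1 * ∏ j : Fin n, f (Fin.succ j) (p.2 j)
            ∂((μ 0).prod (Measure.pi fun j => μ ((0 : Fin (n+1)).succAbove j))) := by
          rw [← hmp.lintegral_comp hmeas]
          simp [MeasurableEquiv.piFinSuccAbove_apply, Fin.zero_succAbove, Fin.tail]
      _ = (∫⁻ t, f 0 t ∂μ 0) * ∏ j : Fin n, ∫⁻ t, f (Fin.succ j) t ∂μ (Fin.succ j) := by
          rw [lintegral_prod_mul (f := fun t => f 0 t)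
            (g := fun z : Fin n → ℝ => ∏ j : Fin n, f (Fin.succ j) (z j)) ((hf 0).aemeasurable)
            ((Finset.measurable_prod _ fun j _ => (hf _).comp (measurable_pi_apply j)).aemeasurable)]
          congr 1
          · simpa [Fin.zero_succAbove] using
              ih (fun j => μ (Fin.succ j)) (fun j => inferInstance) (fun j => f (Fin.succ j))
                (fun j => hf _)
      _ = ∏ i, ∫⁻ t, f i t ∂μ i := by rw [Fin.prod_univ_succ]


lemma integrable_pi_prod {n : ℕ} (μ : Fin n → Measure ℝ) [∀ i, SigmaFinite (μ i)]
    (f : Fin n → ℝ → ℝ) (hf : ∀ i, Measurable (f i)) (hint : ∀ i, Integrable (f i) (μ i)) :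
    Integrable (fun y : Fin n → ℝ => ∏ i, f i (y i)) (Measure.pi μ) := by
  have hm : Measurable fun y : Fin n → ℝ => ∏ i, f i (y i) :=
    Finset.measurable_prod _ fun i _ => (hf i).comp (measurable_pi_apply i)
  refine ⟨hm.aestronglyMeasurable, ?_⟩
  rw [HasFiniteIntegral]
  have : ∀ y : Fin n → ℝ, (‖∏ i, f i (y i)‖₊ : ℝ≥0∞) = ∏ i, (‖f i (y i)‖₊ : ℝ≥0∞) := by
    intro y
    rw [nnnorm_prod, ENNReal.coe_finset_prod]
  simp_rw [enorm_eq_nnnorm, this]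
  rw [lintegral_pi_prod n μ (fun i => inferInstance) _ (fun i => (hf i).nnnorm.coe_nnreal_ennreal)]
  exact ENNReal.prod_lt_top fun i _ => (hint i).2

lemma map_withDensity {α β : Type*} [MeasurableSpace α] [MeasurableSpace β]
    (e : α ≃ᵐ β) (μ : Measure α) (d : α → ℝ≥0∞) (hd : Measurable d) :
    (μ.withDensity d).map e = (μ.map e).withDensity (fun b => d (e.symm b)) := by
  ext s hs
  rw [Measure.map_apply e.measurable hs, withDensity_apply _ (e.measurable hs),
    withDensity_apply _ hs,
    show (fun b => d (e.symm b)) = d ∘ ⇑e.symm from rfl,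
    setLIntegral_map hs (hd.comp e.symm.measurable) e.measurable]
  simp

lemma pi_withDensity {n : ℕ} (μ : Fin n → Measure ℝ) [∀ i, SigmaFinite (μ i)]
    (f : Fin n → ℝ → ℝ≥0∞) (hf : ∀ i, Measurable (f i))
    (hσ : ∀ i, SigmaFinite ((μ i).withDensity (f i))) :
    Measure.pi (fun i => (μ i).withDensity (f i)) =
      (Measure.pi μ).withDensity (fun y => ∏ i, f i (y i)) := by
  haveI := hσ
  refine Measure.pi_eq fun s hs => ?_
  rw [withDensity_apply _ (MeasurableSet.univ_pi hs),
    ← lintegral_indicator (MeasurableSet.univ_pi hs)]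
  have hind : ∀ y : Fin n → ℝ,
      (Set.univ.pi s).indicator (fun y => ∏ i, f i (y i)) y
        = ∏ i, (s i).indicator (f i) (y i) := by
    intro y
    by_cases hy : y ∈ Set.univ.pi s
    · rw [Set.indicator_of_mem hy]
      exact Finset.prod_congr rfl fun i _ =>
        (Set.indicator_of_mem (hy i (Set.mem_univ i)) _).symm
    · rw [Set.indicator_of_notMem hy]
      rw [Set.mem_univ_pi] at hy
      push_neg at hy
      obtain ⟨i, hi⟩ := hy
      exact (Finset.prod_eq_zero (Finset.mem_univ i)
        (Set.indicator_of_notMem hi _)).symm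
  simp_rw [hind]
  rw [lintegral_pi_prod n μ (fun i => inferInstance) _
    (fun i => (hf i).indicator (hs i))]
  exact Finset.prod_congr rfl fun i _ => by
    rw [lintegral_indicator (hs i), withDensity_apply _ (hs i)]

lemma integrable_pow_gauss (m : ℕ) :
    Integrable (fun t : ℝ => t ^ m * rexp (-(1/2) * t ^ 2)) := by
  have h := integrable_rpow_mul_exp_neg_mul_sq (b := 1/2) (by norm_num)
    (s := m) (lt_of_lt_of_le (by norm_num) (Nat.cast_nonneg m))
  simpa [Real.rpow_natCast] using h

lemma integrable_poly_gauss (k : ℕ) :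
    Integrable (fun t : ℝ => (1 + t ^ 2) ^ k) (gaussianReal 0 1) := by
  rw [gaussianReal_of_var_ne_zero 0 one_ne_zero]
  rw [integrable_withDensity_iff (measurable_gaussianPDF 0 1)
    (ae_of_all _ fun x => by rw [gaussianPDF_def]; exact ENNReal.ofReal_lt_top)]
  have htr : ∀ x : ℝ, ((gaussianPDF 0 1 x).toReal) = gaussianPDFReal 0 1 x := fun x => by
    rw [gaussianPDF_def]; exact ENNReal.toReal_ofReal (gaussianPDFReal_nonneg _ _ _)
  simp_rw [htr]
  have hexp : ∀ x : ℝ, gaussianPDFReal 0 1 x = (√(2*π))⁻¹ * rexp (-(1/2) * x^2) := by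
    intro x
    simp only [gaussianPDFReal, NNReal.coe_one, mul_one]
    rw [show -(x-0)^2/2 = -(1/2)*x^2 by ring]
  have hg : Integrable (fun x : ℝ =>
      (√(2*π))⁻¹ * (2^k * (rexp (-(1/2) * x^2) + x^(2*k) * rexp (-(1/2) * x^2)))) := by
    exact (((integrable_exp_neg_mul_sq (by norm_num : (0:ℝ) < 1/2)).add
      (integrable_pow_gauss (2*k))).const_mul _).const_mul _
  refine hg.mono' ?_ (ae_of_all _ fun x => ?_)
  · exact ((by fun_prop : Measurable fun x : ℝ => (1+x^2)^k).mul
      (measurable_gaussianPDFReal 0 1)).aestronglyMeasurable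
  · have hcle : (1+x^2)^k ≤ 2^k * (1 + x^(2*k)) := by
      have h1 : (1+x^2)^k ≤ (2 * max 1 (x^2))^k := by
        refine pow_le_pow_left₀ (by positivity) ?_ k
        rcases le_total 1 (x^2) with h|h
        · rw [max_eq_right h]; nlinarith
        · rw [max_eq_left h]; nlinarith
      refine h1.trans ?_
      rw [mul_pow]
      refine mul_le_mul_of_nonneg_left ?_ (by positivity)
      rcases le_total 1 (x^2) with h|h
      · rw [max_eq_right h, ← pow_mul]
        nlinarith [pow_nonneg (sq_nonneg x) k, pow_le_pow_left₀ (le_of_lt one_pos) h k]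
      · rw [max_eq_left h, one_pow, pow_mul]
        nlinarith [pow_nonneg (sq_nonneg x) k]
    rw [Real.norm_eq_abs, abs_of_nonneg (mul_nonneg (by positivity) (gaussianPDFReal_nonneg _ _ _))]
    rw [hexp x]
    calc (1+x^2)^k * ((√(2*π))⁻¹ * rexp (-(1/2) * x^2))
        ≤ (2^k * (1 + x^(2*k))) * ((√(2*π))⁻¹ * rexp (-(1/2) * x^2)) :=
          mul_le_mul_of_nonneg_right hcle (by positivity)
      _ = (√(2*π))⁻¹ * (2^k * (rexp (-(1/2) * x^2) + x^(2*k) * rexp (-(1/2) * x^2))) := by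
          ring


lemma gaussianPDFReal_std (x : ℝ) :
    gaussianPDFReal 0 1 x = (√(2*π))⁻¹ * rexp (-(1/2) * x^2) := by
  simp only [gaussianPDFReal, NNReal.coe_one, mul_one]
  rw [show -(x-0)^2/2 = -(1/2)*x^2 by ring]

lemma stdGaussian_eq_map (n : ℕ) :
    stdGaussian n = Measure.map (⇑(MeasurableEquiv.toLp 2 (Fin n → ℝ)))
      (Measure.pi fun _ : Fin n => gaussianReal 0 1) := rfl

instance stdGaussian_isProb (n : ℕ) : IsProbabilityMeasure (stdGaussian n) := by
  rw [stdGaussian_eq_map]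
  exact Measure.isProbabilityMeasure_map (MeasurableEquiv.measurable _).aemeasurable

lemma norm_sq_eq {n : ℕ} (x : EuclideanSpace ℝ (Fin n)) : ‖x‖^2 = ∑ i, (x i)^2 := by
  rw [EuclideanSpace.norm_eq, Real.sq_sqrt (by positivity)]
  simp [Real.norm_eq_abs, sq_abs]

lemma abs_coord_le_norm {n : ℕ} (x : EuclideanSpace ℝ (Fin n)) (i : Fin n) :
    |x i| ≤ ‖x‖ := by
  have h2 : (x i)^2 ≤ ‖x‖^2 := by
    rw [norm_sq_eq]
    exact Finset.single_le_sum (f := fun j => (x j)^2) (fun j _ => sq_nonneg _)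
      (Finset.mem_univ i)
  calc |x i| = √((x i)^2) := (Real.sqrt_sq_eq_abs _).symm
    _ ≤ √(‖x‖^2) := Real.sqrt_le_sqrt h2
    _ = ‖x‖ := Real.sqrt_sq (norm_nonneg x)

lemma stdGaussian_withDensity (n : ℕ) :
    stdGaussian n = (volume : Measure (EuclideanSpace ℝ (Fin n))).withDensity
      (fun x => ENNReal.ofReal ((√(2*π))⁻¹ ^ n * rexp (-(1/2) * ‖x‖^2))) := by
  have hgr : gaussianReal 0 1 = (volume : Measure ℝ).withDensity (gaussianPDF 0 1) :=
    gaussianReal_of_var_ne_zero 0 one_ne_zero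
  have hsf : ∀ _i : Fin n, SigmaFinite ((volume : Measure ℝ).withDensity (gaussianPDF 0 1)) :=
    fun _ => by rw [← hgr]; infer_instance
  have hpi : (Measure.pi fun _ : Fin n => gaussianReal 0 1)
      = (volume : Measure (Fin n → ℝ)).withDensity
          (fun y => ∏ i, gaussianPDF 0 1 (y i)) := by
    calc Measure.pi (fun _ : Fin n => gaussianReal 0 1)
        = Measure.pi (fun _ : Fin n => (volume : Measure ℝ).withDensity (gaussianPDF 0 1)) := by
          rw [← hgr]
      _ = (Measure.pi fun _ : Fin n => (volume : Measure ℝ)).withDensity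
            (fun y => ∏ i, gaussianPDF 0 1 (y i)) :=
          pi_withDensity _ _ (fun i => measurable_gaussianPDF 0 1) hsf
      _ = _ := by rw [← volume_pi]
  rw [stdGaussian_eq_map, hpi,
    map_withDensity (MeasurableEquiv.toLp 2 (Fin n → ℝ)) _
      (fun y => ∏ i, gaussianPDF 0 1 (y i))
      (by exact Finset.measurable_prod _ fun i _ =>
        (measurable_gaussianPDF 0 1).comp (measurable_pi_apply i))]
  have hvol : (volume : Measure (Fin n → ℝ)).map
      (⇑(MeasurableEquiv.toLp 2 (Fin n → ℝ)))
      = (volume : Measure (EuclideanSpace ℝ (Fin n))) :=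
    ((EuclideanSpace.volume_preserving_symm_measurableEquiv_toLp (Fin n)).symm _).map_eq
  rw [hvol]
  congr 1
  funext x
  have happ : ∀ i, ((MeasurableEquiv.toLp 2 (Fin n → ℝ)).symm x) i = x i := fun i => rfl
  simp_rw [happ, gaussianPDF_def,
    ← ENNReal.ofReal_prod_of_nonneg (fun i _ => gaussianPDFReal_nonneg _ _ _)]
  congr 1
  calc ∏ i, gaussianPDFReal 0 1 (x i)
      = ∏ i, ((√(2*π))⁻¹ * rexp (-(1/2) * (x i)^2)) :=
        Finset.prod_congr rfl fun i _ => gaussianPDFReal_std (x i)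
    _ = (√(2*π))⁻¹ ^ n * rexp (-(1/2) * ‖x‖^2) := by
        rw [Finset.prod_mul_distrib, Finset.prod_const, Finset.card_univ, Fintype.card_fin,
          ← Real.exp_sum]
        have harg : ∑ i : Fin n, -(1/2) * (x i)^2 = -(1/2) * ‖x‖^2 := by
          rw [norm_sq_eq, Finset.mul_sum]
        rw [harg]

lemma stdGaussian_map_isometry {n : ℕ}
    (L : EuclideanSpace ℝ (Fin n) ≃ₗᵢ[ℝ] EuclideanSpace ℝ (Fin n)) :
    (stdGaussian n).map L = stdGaussian n := by
  rw [stdGaussian_withDensity]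
  have hd : Measurable (fun x : EuclideanSpace ℝ (Fin n) =>
      ENNReal.ofReal ((√(2*π))⁻¹ ^ n * rexp (-(1/2) * ‖x‖^2))) := by fun_prop
  have hmap := map_withDensity L.toMeasurableEquiv volume _ hd
  rw [show ⇑L.toMeasurableEquiv = ⇑L from rfl] at hmap
  rw [hmap, L.measurePreserving.map_eq]
  congr 1
  funext x
  have : ‖(L.toMeasurableEquiv.symm x : EuclideanSpace ℝ (Fin n))‖ = ‖x‖ := by
    rw [L.coe_symm_toMeasurableEquiv]
    exact L.symm.norm_map x
  rw [this]

lemma one_le_prod_real {ι : Type*} {s : Finset ι} {f : ι → ℝ} (h : ∀ j ∈ s, 1 ≤ f j) :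
    1 ≤ ∏ j ∈ s, f j := by
  have := Finset.prod_le_prod (f := fun _ => (1:ℝ)) (g := f) (fun i _ => zero_le_one) h
  simpa using this

lemma single_le_prod_real {ι : Type*} {s : Finset ι} {f : ι → ℝ} (h : ∀ j ∈ s, 1 ≤ f j)
    {i : ι} (hi : i ∈ s) : f i ≤ ∏ j ∈ s, f j := by
  classical
  rw [← Finset.mul_prod_erase s f hi]
  exact le_mul_of_one_le_right (le_trans zero_le_one (h i hi))
    (one_le_prod_real fun j hj => h j (Finset.mem_of_mem_erase hj))

lemma stdGaussian_moment (n k : ℕ) :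
    Integrable (fun x : EuclideanSpace ℝ (Fin n) => ‖x‖^k) (stdGaussian n) := by
  rcases Nat.eq_zero_or_pos k with rfl | hk
  · simpa using (integrable_const (1:ℝ))
  rw [stdGaussian_eq_map,
    (MeasurableEquiv.measurableEmbedding _).integrable_map_iff]
  set R : (Fin n → ℝ) → ℝ := fun y => ∏ i, (1 + (y i)^2) with hR
  have hQint : Integrable (fun y => (R y)^k) (Measure.pi fun _ : Fin n => gaussianReal 0 1) := by
    have := integrable_pi_prod (fun _ : Fin n => gaussianReal 0 1)
      (fun _ t => (1 + t^2)^k) (fun i => by fun_prop) (fun i => integrable_poly_gauss k)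
    simpa [hR, ← Finset.prod_pow] using this
  have hbound : Integrable (fun y => 1 + (n:ℝ)^k * (R y)^k)
      (Measure.pi fun _ : Fin n => gaussianReal 0 1) :=
    (integrable_const 1).add (hQint.const_mul _)
  refine hbound.mono' ?_ (ae_of_all _ fun y => ?_)
  · exact ((measurable_norm.comp
      (MeasurableEquiv.measurable _)).pow_const k).aestronglyMeasurable
  · set x : EuclideanSpace ℝ (Fin n) := (MeasurableEquiv.toLp 2 (Fin n → ℝ)) y with hx
    have hxy : ∀ i, x i = y i := fun i => rfl
    have h1 : ∀ i : Fin n, (1:ℝ) ≤ 1 + (y i)^2 := fun i => by nlinarith [sq_nonneg (y i)]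
    have hR1 : (1:ℝ) ≤ R y := one_le_prod_real fun i _ => h1 i
    have hterm : ∀ i : Fin n, 1 + (y i)^2 ≤ R y := fun i =>
      single_le_prod_real (fun j _ => h1 j) (Finset.mem_univ i)
    have hsum : ‖x‖^2 ≤ (n:ℝ) * R y := by
      rw [norm_sq_eq]
      simp_rw [hxy]
      calc ∑ i, (y i)^2 ≤ ∑ i : Fin n, (1 + (y i)^2) :=
            Finset.sum_le_sum fun i _ => by nlinarith
        _ ≤ (Finset.univ : Finset (Fin n)).card • R y :=
            Finset.sum_le_card_nsmul _ _ _ fun i _ => hterm i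
        _ = (n:ℝ) * R y := by
            rw [Finset.card_univ, Fintype.card_fin, nsmul_eq_mul]
    have hnorm : ‖‖x‖^k‖ = ‖x‖^k := by
      rw [Real.norm_eq_abs, abs_of_nonneg (by positivity)]
    simp only [Function.comp_apply]
    rw [← hx, hnorm]
    rcases le_total ‖x‖ 1 with h | h
    · have : ‖x‖^k ≤ 1 := pow_le_one₀ (norm_nonneg _) h
      nlinarith [pow_nonneg (le_trans zero_le_one hR1) k,
        pow_nonneg (Nat.cast_nonneg (α := ℝ) n) k,
        mul_nonneg (pow_nonneg (Nat.cast_nonneg (α := ℝ) n) k)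
          (pow_nonneg (le_trans zero_le_one hR1) k)]
    · have h2 : ‖x‖^k ≤ (‖x‖^2)^k := by
        apply pow_le_pow_left₀ (norm_nonneg _)
        nlinarith
      have h3 : (‖x‖^2)^k ≤ ((n:ℝ) * R y)^k :=
        pow_le_pow_left₀ (sq_nonneg _) hsum k
      rw [mul_pow] at h3
      nlinarith [h2.trans h3]


noncomputable def MT {n : ℕ} (r : ℕ) (ν : Measure (EuclideanSpace ℝ (Fin n))) :
    (Fin r → Fin n) → ℝ := fun idx => ∫ x, ∏ j, x (idx j) ∂ν

lemma integrable_prodCoord {n r : ℕ} (ν : Measure (EuclideanSpace ℝ (Fin n)))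
    (hm : Integrable (fun x => ‖x‖^r) ν) (idx : Fin r → Fin n) :
    Integrable (fun x : EuclideanSpace ℝ (Fin n) => ∏ j, x (idx j)) ν := by
  refine hm.mono' ?_ (ae_of_all _ fun x => ?_)
  · have hc : Continuous fun x : EuclideanSpace ℝ (Fin n) => ∏ j, x (idx j) :=
      continuous_finset_prod _ fun j _ => (EuclideanSpace.proj (idx j)).continuous
    exact hc.aestronglyMeasurable
  · rw [Real.norm_eq_abs, Finset.abs_prod]
    calc ∏ j, |x (idx j)| ≤ ∏ _j : Fin r, ‖x‖ :=
        Finset.prod_le_prod (fun j _ => abs_nonneg _) (fun j _ => abs_coord_le_norm x _)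
      _ = ‖x‖^r := by rw [Finset.prod_const, Finset.card_univ, Fintype.card_fin]

lemma inner_pow_expand {n r : ℕ} (x w : EuclideanSpace ℝ (Fin n)) :
    (⟪x, w⟫ : ℝ)^r = ∑ idx : Fin r → Fin n, (∏ j, w (idx j)) * ∏ j, x (idx j) := by
  have hinner : (⟪x, w⟫ : ℝ) = ∑ i, x i * w i := by
    simp [PiLp.inner_apply, RCLike.inner_apply, conj_trivial, mul_comm]
  rw [hinner, Fintype.sum_pow]
  refine Finset.sum_congr rfl fun idx _ => ?_
  rw [← Finset.prod_mul_distrib]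
  exact Finset.prod_congr rfl fun j _ => mul_comm _ _

lemma integral_inner_pow {n r : ℕ} (ν : Measure (EuclideanSpace ℝ (Fin n)))
    (hm : Integrable (fun x => ‖x‖^r) ν) (w : EuclideanSpace ℝ (Fin n)) :
    ∫ x, (⟪x, w⟫ : ℝ)^r ∂ν = ∑ idx : Fin r → Fin n, (∏ j, w (idx j)) * MT r ν idx := by
  simp_rw [inner_pow_expand]
  rw [integral_finset_sum _ fun idx _ => (integrable_prodCoord ν hm idx).const_mul _]
  exact Finset.sum_congr rfl fun idx _ => integral_const_mul _ _

lemma integral_double_inner_pow {n r : ℕ} (ν μ : Measure (EuclideanSpace ℝ (Fin n)))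
    (hmν : Integrable (fun x => ‖x‖^r) ν) (hmμ : Integrable (fun x => ‖x‖^r) μ) :
    ∫ x, (∫ y, (⟪x, y⟫ : ℝ)^r ∂μ) ∂ν = ∑ idx : Fin r → Fin n, MT r ν idx * MT r μ idx := by
  have h1 : ∀ x : EuclideanSpace ℝ (Fin n), ∫ y, (⟪x, y⟫:ℝ)^r ∂μ
      = ∑ idx : Fin r → Fin n, (∏ j, x (idx j)) * MT r μ idx := by
    intro x
    rw [← integral_inner_pow μ hmμ x]
    simp_rw [real_inner_comm]
  simp_rw [h1]
  rw [integral_finset_sum _ fun idx _ => (integrable_prodCoord ν hmν idx).mul_const _]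
  exact Finset.sum_congr rfl fun idx _ => integral_mul_const _ _

lemma sum_prod_sq {n : ℕ} (r : ℕ) (v : EuclideanSpace ℝ (Fin n)) (hv : ‖v‖ = 1) :
    ∑ idx : Fin r → Fin n, (∏ j, v (idx j))^2 = 1 := by
  have h : ∀ idx : Fin r → Fin n, (∏ j, v (idx j))^2 = ∏ j, (v (idx j))^2 := fun idx => by
    rw [← Finset.prod_pow]
  simp_rw [h]
  rw [← Fintype.sum_pow (fun i => (v i)^2) r, ← norm_sq_eq, hv]
  norm_num

lemma gauss_marginal {n r : ℕ} (hr : r ≠ 0) (i0 : Fin n) (w : EuclideanSpace ℝ (Fin n)) :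
    ∫ y, (⟪y, w⟫ : ℝ)^r ∂stdGaussian n
      = ‖w‖^r * ∫ y, ((y : EuclideanSpace ℝ (Fin n)) i0)^r ∂stdGaussian n := by
  rcases eq_or_ne w 0 with rfl | hw
  · simp [zero_pow hr]
  · set u : EuclideanSpace ℝ (Fin n) := ‖w‖⁻¹ • w with hu_def
    have hu : ‖u‖ = 1 := by
      rw [hu_def, norm_smul, norm_inv, norm_norm,
        inv_mul_cancel₀ (norm_ne_zero_iff.2 hw)]
    have hcard : Module.finrank ℝ (EuclideanSpace ℝ (Fin n)) = Fintype.card (Fin n) := by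
      simp [finrank_euclideanSpace_fin]
    have horth : Orthonormal ℝ (({i0} : Set (Fin n)).restrict (fun _ => u)) := by
      constructor
      · intro i; exact hu
      · intro i j hij
        exact absurd (Subtype.ext (by
          have hi := i.2; have hj := j.2
          simp only [Set.mem_singleton_iff] at hi hj
          rw [hi, hj])) hij
    obtain ⟨b, hb⟩ := horth.exists_orthonormalBasis_extension_of_card_eq hcard
    have hb0 : b i0 = u := hb i0 rfl
    set e := b.repr with he
    have hw_eq : w = ‖w‖ • u := by
      rw [hu_def, smul_smul, mul_inv_cancel₀ (norm_ne_zero_iff.2 hw), one_smul]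
    have key : ∀ y : EuclideanSpace ℝ (Fin n), (⟪y, w⟫:ℝ) = ‖w‖ * (e y i0) := by
      intro y
      conv_lhs => rw [hw_eq]
      rw [real_inner_smul_right]
      congr 1
      calc (⟪y, u⟫:ℝ) = ⟪e y, e u⟫ := (e.inner_map_map y u).symm
        _ = ⟪e y, EuclideanSpace.single i0 (1:ℝ)⟫ := by
            rw [← hb0, he, b.repr_self i0]
        _ = e y i0 := by
            rw [EuclideanSpace.inner_single_right]; simp
    simp_rw [key, mul_pow]
    rw [integral_const_mul]
    congr 1
    have hmeas : AEStronglyMeasurable (fun z : EuclideanSpace ℝ (Fin n) => (z i0)^r)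
        ((stdGaussian n).map e) :=
      ((EuclideanSpace.proj i0).continuous.pow r).aestronglyMeasurable
    calc ∫ y, ((e y) i0)^r ∂stdGaussian n
        = ∫ z, (z i0)^r ∂((stdGaussian n).map e) :=
          (integral_map e.continuous.measurable.aemeasurable hmeas).symm
      _ = ∫ z, (z i0)^r ∂stdGaussian n := by rw [stdGaussian_map_isometry e]

end CompAux

/-- Comparison lemma for even moments: if some unit marginal `⟨X,v⟩` has `r`-th moment
(`r ≥ 2` even) deviating from the gaussian by a `δ`-fraction, then either the norm moments
or the inner-product moments of `X` deviate from the corresponding gaussian quantities. -/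
theorem comparison_even_moments
    {Ω : Type*} [MeasurableSpace Ω] (P : Measure Ω) [IsProbabilityMeasure P]
    {n : ℕ} (hn : 2 ≤ n) (X X' : Ω → EuclideanSpace ℝ (Fin n))
    (hX : Measurable X) (hX' : Measurable X')
    (hcopy : Measure.map X' P = Measure.map X P)
    (hindep : IndepFun X X' P)
    (hmom : ∀ k : ℕ, Integrable (fun ω => ‖X ω‖ ^ k) P)
    (v : EuclideanSpace ℝ (Fin n)) (hv : ‖v‖ = 1)
    (r : ℕ) (hr : 2 ≤ r) (hreven : Even r)
    (δ : ℝ) (hδ0 : 0 < δ) (hδ1 : δ ≤ 1)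
    (hdev : δ * (∫ x, ⟪x, v⟫ ^ r ∂stdGaussian n) ≤
      |(∫ ω, ⟪X ω, v⟫ ^ r ∂P) - ∫ x, ⟪x, v⟫ ^ r ∂stdGaussian n|) :
    δ ^ 2 / 4 * (∫ x, ⟪x, v⟫ ^ r ∂stdGaussian n) ≤
        |(∫ ω, ‖X ω‖ ^ r ∂P) - ∫ x, ‖x‖ ^ r ∂stdGaussian n| ∨
    15 * δ ^ 2 / 64 * (∫ x, ⟪x, v⟫ ^ r ∂stdGaussian n) ^ 2 ≤
        |(∫ ω, ⟪X ω, X' ω⟫ ^ r ∂P) -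
          ∫ p, ⟪p.1, p.2⟫ ^ r ∂((stdGaussian n).prod (stdGaussian n))| := by
  classical
  haveI : NeZero n := ⟨by omega⟩
  haveI : IsProbabilityMeasure (stdGaussian n) := CompAux.stdGaussian_isProb n
  set g := stdGaussian n with hgdef
  set ν := Measure.map X P with hν
  haveI : IsProbabilityMeasure ν := Measure.isProbabilityMeasure_map hX.aemeasurable
  have hr0 : r ≠ 0 := by omega
  -- moments
  have hνmom : Integrable (fun x => ‖x‖^r) ν := by
    rw [hν, integrable_map_measure (Continuous.aestronglyMeasurable (f := fun x : EuclideanSpace ℝ (Fin n) => ‖x‖^r)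
        (continuous_norm.pow r))
      hX.aemeasurable]
    exact hmom r
  have hgmom : Integrable (fun x => ‖x‖^r) g := CompAux.stdGaussian_moment n r
  -- gaussian marginal
  set m := ∫ y, ((y : EuclideanSpace ℝ (Fin n)) 0)^r ∂g with hmdef
  have hL4 : ∀ w : EuclideanSpace ℝ (Fin n),
      ∫ y, (⟪y, w⟫:ℝ)^r ∂g = ‖w‖^r * m := fun w => CompAux.gauss_marginal hr0 0 w
  have hm0 : 0 ≤ m := by
    rw [hmdef]
    exact integral_nonneg fun y => hreven.pow_nonneg _
  have hγ : ∫ x, (⟪x, v⟫:ℝ)^r ∂g = m := by rw [hL4 v, hv, one_pow, one_mul]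
  -- tensors
  set Mν := CompAux.MT r ν with hMν
  set Mg := CompAux.MT r g with hMg
  set V : (Fin r → Fin n) → ℝ := fun idx => ∏ j, v (idx j) with hV
  have e1 : ∫ x, (⟪x, v⟫:ℝ)^r ∂ν = ∑ idx, V idx * Mν idx :=
    CompAux.integral_inner_pow ν hνmom v
  have e2 : m = ∑ idx, V idx * Mg idx := by
    rw [← hγ]; exact CompAux.integral_inner_pow g hgmom v
  have e3 : ∫ x, (∫ y, (⟪x, y⟫:ℝ)^r ∂ν) ∂ν = ∑ idx, Mν idx * Mν idx :=
    CompAux.integral_double_inner_pow ν ν hνmom hνmom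
  set Bν := ∫ x, ‖x‖^r ∂ν with hBν
  set Bg := ∫ x, ‖x‖^r ∂g with hBg
  have hinner_g : ∀ x : EuclideanSpace ℝ (Fin n), ∫ y, (⟪x, y⟫:ℝ)^r ∂g = ‖x‖^r * m := by
    intro x
    rw [← hL4 x]
    simp_rw [real_inner_comm]
  have e4 : ∑ idx, Mν idx * Mg idx = Bν * m := by
    rw [← CompAux.integral_double_inner_pow ν g hνmom hgmom]
    simp_rw [hinner_g]
    rw [integral_mul_const]
  have e5 : ∑ idx, Mg idx * Mg idx = Bg * m := by
    rw [← CompAux.integral_double_inner_pow g g hgmom hgmom]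
    simp_rw [hinner_g]
    rw [integral_mul_const]
  have e6 : ∑ idx, (V idx)^2 = 1 := CompAux.sum_prod_sq r v hv
  -- rewriting statement integrals
  have hXv : ∫ ω, (⟪X ω, v⟫:ℝ)^r ∂P = ∫ x, (⟪x, v⟫:ℝ)^r ∂ν := by
    rw [hν, integral_map hX.aemeasurable
      (((continuous_id.inner continuous_const).pow r).aestronglyMeasurable)]
  have hXnorm : ∫ ω, ‖X ω‖^r ∂P = Bν := by
    rw [hBν, hν, integral_map hX.aemeasurable (Continuous.aestronglyMeasurable (f := fun x : EuclideanSpace ℝ (Fin n) => ‖x‖^r)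
      (continuous_norm.pow r))]
  have hpair : Measure.map (fun ω => (X ω, X' ω)) P = ν.prod ν := by
    rw [(indepFun_iff_map_prod_eq_prod_map_map hX.aemeasurable hX'.aemeasurable).1 hindep,
      hcopy, hν]
  have hinteg_prod : ∀ (μ1 μ2 : Measure (EuclideanSpace ℝ (Fin n)))
      [SFinite μ1] [SFinite μ2],
      Integrable (fun x => ‖x‖^r) μ1 → Integrable (fun x => ‖x‖^r) μ2 →
      Integrable (fun p : EuclideanSpace ℝ (Fin n) × EuclideanSpace ℝ (Fin n) =>
        (⟪p.1, p.2⟫:ℝ)^r) (μ1.prod μ2) := by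
    intro μ1 μ2 _ _ h1 h2
    refine (h1.mul_prod h2).mono'
      (((continuous_fst.inner continuous_snd).pow r).aestronglyMeasurable)
      (ae_of_all _ fun p => ?_)
    rw [Real.norm_eq_abs, abs_pow]
    calc |(⟪p.1, p.2⟫:ℝ)|^r ≤ (‖p.1‖ * ‖p.2‖)^r :=
        pow_le_pow_left₀ (abs_nonneg _) (abs_real_inner_le_norm _ _) r
      _ = ‖p.1‖^r * ‖p.2‖^r := mul_pow _ _ r
  have hXX : ∫ ω, (⟪X ω, X' ω⟫:ℝ)^r ∂P = ∑ idx, Mν idx * Mν idx := by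
    rw [← e3, ← integral_prod _ (hinteg_prod ν ν hνmom hνmom), ← hpair,
      integral_map (hX.prodMk hX').aemeasurable
        (((continuous_fst.inner continuous_snd).pow r).aestronglyMeasurable)]
  have hGG : ∫ p, (⟪p.1, p.2⟫:ℝ)^r ∂(g.prod g) = Bg * m := by
    rw [integral_prod _ (hinteg_prod g g hgmom hgmom)]
    simp_rw [hinner_g]
    rw [integral_mul_const]
  -- Cauchy-Schwarz
  set a := ∑ idx, (Mν idx - Mg idx) * V idx with ha_def
  have ha : a = (∫ x, (⟪x, v⟫:ℝ)^r ∂ν) - m := by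
    rw [ha_def, e1, e2, ← Finset.sum_sub_distrib]
    exact Finset.sum_congr rfl fun idx _ => by ring
  have hCS : a^2 ≤ ∑ idx, (Mν idx - Mg idx)^2 := by
    have h := Finset.sum_mul_sq_le_sq_mul_sq Finset.univ
      (fun idx => Mν idx - Mg idx) V
    rw [e6, mul_one] at h
    exact h
  have hT : ∑ idx, (Mν idx - Mg idx)^2
      = (∑ idx, Mν idx * Mν idx) - 2 * (Bν * m) + Bg * m := by
    rw [← e4, ← e5, Finset.mul_sum, ← Finset.sum_sub_distrib, ← Finset.sum_add_distrib]
    exact Finset.sum_congr rfl fun idx _ => by ring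
  -- deviation hypothesis
  rw [hγ, hXv] at hdev
  have hdev2 : (δ * m)^2 ≤ a^2 := by
    rw [ha]
    calc (δ * m)^2 ≤ |(∫ x, (⟪x, v⟫:ℝ)^r ∂ν) - m|^2 :=
        pow_le_pow_left₀ (mul_nonneg hδ0.le hm0) hdev 2
      _ = ((∫ x, (⟪x, v⟫:ℝ)^r ∂ν) - m)^2 := sq_abs _
  set A := ∑ idx, Mν idx * Mν idx with hA
  have hkey : δ^2 * m^2 ≤ A - 2 * (Bν * m) + Bg * m := by
    have := hdev2.trans (hCS.trans_eq hT)
    linarith [this]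
  by_cases hcase : δ^2/4 * m ≤ |Bν - Bg|
  · left
    rw [hγ, hXnorm]
    exact hcase
  · right
    push_neg at hcase
    rw [hγ, hXX, hGG]
    have h3 : A - Bg * m ≤ |A - Bg * m| := le_abs_self _
    have h4 : m * |Bν - Bg| ≤ δ^2/4 * m^2 := by
      calc m * |Bν - Bg| ≤ m * (δ^2/4 * m) := mul_le_mul_of_nonneg_left hcase.le hm0
        _ = δ^2/4 * m^2 := by ring
    have h5 : -(m * |Bν - Bg|) ≤ Bν * m - Bg * m := by
      have hmm := mul_le_mul_of_nonneg_left (neg_abs_le (Bν - Bg)) hm0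
      calc -(m * |Bν - Bg|) = m * -|Bν - Bg| := by ring
        _ ≤ m * (Bν - Bg) := hmm
        _ = Bν * m - Bg * m := by ring
    have hpos : 0 ≤ δ^2 * m^2 := by positivity
    linarith [hkey, h3, h4, h5]

end
end

section
/- Let X follow the isotropic NGCA model, with E spanned by the first d standard basis vectors. Then for any α for which the test matrices are defined, Φ_{X,α} and Ψ_{X,α} are block diagonal with respect to the decomposition ℝⁿ = E ⊕ E⊥: the top-left d×d block of Φ_{X,α} equals Φ_{X̃,α}, its bottom-right (n−d)×(n−d) block equals Φ_{g,α}, the off-diagonal blocks vanish, and similarly Ψ_{X,α} has diagonal blocks Ψ_{X̃,α} and Ψ_{g,α} and zero off-diagonal blocks. -/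
open MeasureTheory ProbabilityTheory Real
open scoped RealInnerProductSpace ENNReal

noncomputable section

variable {Ω : Type*} [MeasurableSpace Ω]

/-- The component of `x ∈ ℝ^{d+m}` in the span `E` of the first `d` coordinates. -/
def firstCoords {d m : ℕ} (x : EuclideanSpace ℝ (Fin (d + m))) : EuclideanSpace ℝ (Fin d) :=
  (EuclideanSpace.equiv (Fin d) ℝ).symm fun i => x (Fin.castAdd m i)

/-- The component of `x ∈ ℝ^{d+m}` in the orthogonal complement `E⊥` of the span of the
first `d` coordinates. -/
def lastCoords {d m : ℕ} (x : EuclideanSpace ℝ (Fin (d + m))) : EuclideanSpace ℝ (Fin m) :=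
  (EuclideanSpace.equiv (Fin m) ℝ).symm fun j => x (Fin.natAdd d j)

namespace NGCAaux

lemma firstCoords_apply {d m : ℕ} (x : EuclideanSpace ℝ (Fin (d+m))) (i : Fin d) :
    firstCoords x i = x (Fin.castAdd m i) := rfl

lemma lastCoords_apply {d m : ℕ} (x : EuclideanSpace ℝ (Fin (d+m))) (j : Fin m) :
    lastCoords x j = x (Fin.natAdd d j) := rfl

lemma meas_first {d m : ℕ} :
    Measurable fun x : EuclideanSpace ℝ (Fin (d+m)) => firstCoords (d:=d) (m:=m) x :=
  (WithLp.measurable_toLp 2 _).comp (measurable_pi_lambda _ fun _ => (measurable_pi_apply _).comp (WithLp.measurable_ofLp 2 _))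

lemma meas_last {d m : ℕ} :
    Measurable fun x : EuclideanSpace ℝ (Fin (d+m)) => lastCoords (d:=d) (m:=m) x :=
  (WithLp.measurable_toLp 2 _).comp (measurable_pi_lambda _ fun _ => (measurable_pi_apply _).comp (WithLp.measurable_ofLp 2 _))

lemma inner_split {d m : ℕ} (x y : EuclideanSpace ℝ (Fin (d+m))) :
    ⟪x, y⟫ = ⟪firstCoords x, firstCoords y⟫ + ⟪lastCoords x, lastCoords y⟫ := by
  simp [PiLp.inner_apply, Fin.sum_univ_add, firstCoords, lastCoords]

lemma norm_split {d m : ℕ} (x : EuclideanSpace ℝ (Fin (d+m))) :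
    ‖x‖^2 = ‖firstCoords x‖^2 + ‖lastCoords x‖^2 := by
  rw [← real_inner_self_eq_norm_sq, ← real_inner_self_eq_norm_sq, ← real_inner_self_eq_norm_sq,
    inner_split]

variable {A B A' B' : Type*} [MeasurableSpace A] [MeasurableSpace B]
  [MeasurableSpace A'] [MeasurableSpace B']

/-- the shuffle `((a,b),(c,d)) ↦ ((a,c),(b,d))` is measure preserving. -/
lemma measurePreserving_shuffle (μ : Measure A) (ν : Measure B) (μ' : Measure A') (ν' : Measure B')
    [SFinite μ] [SFinite ν] [SFinite μ'] [SFinite ν'] :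
    MeasurePreserving (fun p : (A × B) × (A' × B') => ((p.1.1, p.2.1), (p.1.2, p.2.2)))
      ((μ.prod ν).prod (μ'.prod ν')) ((μ.prod μ').prod (ν.prod ν')) := by
  have h1 := measurePreserving_prodAssoc μ ν (μ'.prod ν')
  have h2 : MeasurePreserving (fun q : B × (A' × B') => (q.2.1, (q.1, q.2.2)))
      (ν.prod (μ'.prod ν')) (μ'.prod (ν.prod ν')) := by
    have a1 := (measurePreserving_prodAssoc ν μ' ν').symm (MeasurableEquiv.prodAssoc)
    have a2 := (Measure.measurePreserving_swap (μ := ν) (ν := μ')).prod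
      (MeasurePreserving.id ν')
    have a3 := measurePreserving_prodAssoc μ' ν ν'
    exact (a3.comp a2).comp a1
  have h3 := (MeasurePreserving.id μ).prod h2
  have h4 := (measurePreserving_prodAssoc μ μ' (ν.prod ν')).symm MeasurableEquiv.prodAssoc
  exact (h4.comp h3).comp h1

lemma gaussianReal_map_neg' : (gaussianReal 0 1).map (fun x : ℝ => -x) = gaussianReal 0 1 := by
  have := gaussianReal_map_const_mul (μ := 0) (v := 1) (-1)
  simp only [neg_one_mul, mul_zero] at this
  rw [this]
  congr 1
  ext
  norm_num

lemma stdGaussian_map_neg (m : ℕ) :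
    (stdGaussian m).map (fun x => -x) = stdGaussian m := by
  have hpi : MeasurePreserving (fun (a : Fin m → ℝ) i => -(a i))
      (Measure.pi fun _ : Fin m => gaussianReal 0 1)
      (Measure.pi fun _ : Fin m => gaussianReal 0 1) :=
    measurePreserving_pi _ _ fun _ => ⟨measurable_neg, gaussianReal_map_neg'⟩
  unfold _root_.stdGaussian
  rw [Measure.map_map (by exact measurable_neg)
    ((EuclideanSpace.equiv (Fin m) ℝ).symm.continuous.measurable)]
  rw [show ((fun x : EuclideanSpace ℝ (Fin m) => -x) ∘ (EuclideanSpace.equiv (Fin m) ℝ).symm)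
      = ((EuclideanSpace.equiv (Fin m) ℝ).symm ∘ fun (a : Fin m → ℝ) i => -(a i)) from rfl]
  rw [← Measure.map_map ((EuclideanSpace.equiv (Fin m) ℝ).symm.continuous.measurable)
    hpi.measurable, hpi.map_eq]

lemma integral_eq_zero_of_neg_inv {α : Type*} [MeasurableSpace α] (μ : Measure α)
    (n : α → α) (hn : Measurable n) (hmap : μ.map n = μ) {F : α → ℝ} (hF : Measurable F)
    (hodd : ∀ a, F (n a) = - F a) : ∫ a, F a ∂μ = 0 := by
  have h1 : ∫ a, F a ∂μ = ∫ a, F (n a) ∂μ := by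
    conv_lhs => rw [← hmap]
    exact integral_map hn.aemeasurable hF.aestronglyMeasurable
  have h2 : ∫ a, F (n a) ∂μ = - ∫ a, F a ∂μ := by
    simp_rw [hodd]; exact integral_neg F
  linarith [h1, h2]

lemma lintegral_nnnorm_ne_zero {C : Type*} [MeasurableSpace C] (ρ : Measure C)
    [IsProbabilityMeasure ρ] (u : C → ℝ) (hu : Measurable u) (hupos : ∀ c, 0 < u c) :
    (∫⁻ c, ‖u c‖₊ ∂ρ) ≠ 0 := by
  intro hzero
  rw [lintegral_eq_zero_iff (by fun_prop)] at hzero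
  obtain ⟨c, hc⟩ := hzero.exists
  simp only [Pi.zero_apply, ENNReal.coe_eq_zero, nnnorm_eq_zero] at hc
  exact absurd hc (hupos c).ne'

lemma cancel_right {a b c : ℝ} (hb : b ≠ 0) : (a * b)⁻¹ * (c * b) = a⁻¹ * c := by
  calc (a * b)⁻¹ * (c * b) = a⁻¹ * c * (b⁻¹ * b) := by rw [mul_inv]; ring
    _ = a⁻¹ * c := by rw [inv_mul_cancel₀ hb, mul_one]

lemma cancel_left {a b c : ℝ} (ha : a ≠ 0) : (a * b)⁻¹ * (a * c) = b⁻¹ * c := by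
  calc (a * b)⁻¹ * (a * c) = b⁻¹ * c * (a⁻¹ * a) := by rw [mul_inv]; ring
    _ = b⁻¹ * c := by rw [inv_mul_cancel₀ ha, mul_one]

lemma integrable_of_prod {μ : Measure A} {ν : Measure B}
    [IsProbabilityMeasure μ] [IsProbabilityMeasure ν]
    {f : A → ℝ} {g : B → ℝ} (hf : Measurable f) (hg : Measurable g)
    (hfpos : ∀ a, 0 < f a) (hgpos : ∀ b, 0 < g b)
    (h : Integrable (fun p : A × B => f p.1 * g p.2) (μ.prod ν)) :
    Integrable f μ ∧ Integrable g ν := by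
  have hfin : (∫⁻ a, ‖f a‖₊ ∂μ) * (∫⁻ b, ‖g b‖₊ ∂ν) < ⊤ := by
    calc (∫⁻ a, ‖f a‖₊ ∂μ) * (∫⁻ b, ‖g b‖₊ ∂ν)
        = ∫⁻ p : A × B, (‖f p.1‖₊ : ENNReal) * ‖g p.2‖₊ ∂(μ.prod ν) :=
          (lintegral_prod_mul (by fun_prop) (by fun_prop)).symm
      _ = ∫⁻ p : A × B, (‖f p.1 * g p.2‖₊ : ENNReal) ∂(μ.prod ν) := by
          simp_rw [nnnorm_mul, ENNReal.coe_mul]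
      _ < ⊤ := h.2
  have hfne := lintegral_nnnorm_ne_zero μ f hf hfpos
  have hgne := lintegral_nnnorm_ne_zero ν g hg hgpos
  constructor
  · exact ⟨hf.aestronglyMeasurable, ENNReal.lt_top_of_mul_ne_top_left hfin.ne hgne⟩
  · exact ⟨hg.aestronglyMeasurable, ENNReal.lt_top_of_mul_ne_top_right hfin.ne hfne⟩

end NGCAaux

set_option maxHeartbeats 1000000 in
/-- **Block diagonalization of the test matrices.**  In the isotropic NGCA model with `E`
spanned by the first `d` standard basis vectors of `ℝⁿ`, `n = d + m`, the test matrices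
`Φ_{X,α}` and `Ψ_{X,α}` are block diagonal with diagonal blocks the test matrices of the
non-gaussian component `X̃` and of the gaussian component `g`, and vanishing off-diagonal
blocks. -/
theorem test_matrices_block_diagonal
    {Ω : Type*} [MeasurableSpace Ω] (P : Measure Ω) [IsProbabilityMeasure P]
    {d m : ℕ} (X X' : Ω → EuclideanSpace ℝ (Fin (d + m)))
    (hX : Measurable X) (hX' : Measurable X')
    (hcopy : Measure.map X' P = Measure.map X P)
    (hindepcopy : IndepFun X X' P)
    -- the isotropic NGCA model
    (hindep : IndepFun (fun ω => firstCoords (X ω)) (fun ω => lastCoords (X ω)) P)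
    (hgauss : Measure.map (fun ω => lastCoords (X ω)) P = stdGaussian m)
    (hmean : (∫ ω, X ω ∂P) = 0)
    (hcov : ∀ i j : Fin (d + m), (∫ ω, X ω i * X ω j ∂P) = if i = j then (1 : ℝ) else 0)
    -- the test matrices are defined at α
    (α : ℝ)
    (hΦZ : Integrable (fun ω => Real.exp (-α * ‖X ω‖ ^ 2)) P)
    (hΦint : ∀ a b : Fin (d + m),
      Integrable (fun ω => Real.exp (-α * ‖X ω‖ ^ 2) * (X ω a * X ω b)) P)
    (hΨZ : Integrable (fun ω => Real.exp (-α * ⟪X ω, X' ω⟫)) P)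
    (hΨint : ∀ a b : Fin (d + m),
      Integrable (fun ω => Real.exp (-α * ⟪X ω, X' ω⟫) * (X ω a * X' ω b)) P) :
    (∀ i j : Fin d, PhiMat P X α (Fin.castAdd m i) (Fin.castAdd m j) =
        PhiMat P (fun ω => firstCoords (X ω)) α i j) ∧
    (∀ i j : Fin m, PhiMat P X α (Fin.natAdd d i) (Fin.natAdd d j) =
        PhiMat P (fun ω => lastCoords (X ω)) α i j) ∧
    (∀ (i : Fin d) (j : Fin m), PhiMat P X α (Fin.castAdd m i) (Fin.natAdd d j) = 0 ∧
        PhiMat P X α (Fin.natAdd d j) (Fin.castAdd m i) = 0) ∧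
    (∀ i j : Fin d, PsiMat P X X' α (Fin.castAdd m i) (Fin.castAdd m j) =
        PsiMat P (fun ω => firstCoords (X ω)) (fun ω => firstCoords (X' ω)) α i j) ∧
    (∀ i j : Fin m, PsiMat P X X' α (Fin.natAdd d i) (Fin.natAdd d j) =
        PsiMat P (fun ω => lastCoords (X ω)) (fun ω => lastCoords (X' ω)) α i j) ∧
    (∀ (i : Fin d) (j : Fin m), PsiMat P X X' α (Fin.castAdd m i) (Fin.natAdd d j) = 0 ∧
        PsiMat P X X' α (Fin.natAdd d j) (Fin.castAdd m i) = 0) := by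
  classical
  have hφ1 : Measurable (firstCoords (d:=d) (m:=m)) := NGCAaux.meas_first
  have hφ2 : Measurable (lastCoords (d:=d) (m:=m)) := NGCAaux.meas_last
  have hφ : Measurable fun x : EuclideanSpace ℝ (Fin (d+m)) => (firstCoords x, lastCoords x) :=
    hφ1.prodMk hφ2
  have hX1 : Measurable fun ω => firstCoords (X ω) := hφ1.comp hX
  have hX2 : Measurable fun ω => lastCoords (X ω) := hφ2.comp hX
  have hX1' : Measurable fun ω => firstCoords (X' ω) := hφ1.comp hX'
  have hX2' : Measurable fun ω => lastCoords (X' ω) := hφ2.comp hX'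
  set μ₁ : Measure (EuclideanSpace ℝ (Fin d)) := P.map (fun ω => firstCoords (X ω)) with hμ₁
  set μ₂ : Measure (EuclideanSpace ℝ (Fin m)) := P.map (fun ω => lastCoords (X ω)) with hμ₂
  haveI : IsProbabilityMeasure μ₁ := Measure.isProbabilityMeasure_map hX1.aemeasurable
  haveI : IsProbabilityMeasure μ₂ := Measure.isProbabilityMeasure_map hX2.aemeasurable
  haveI : NeZero μ₁ := ⟨IsProbabilityMeasure.ne_zero μ₁⟩
  haveI : NeZero μ₂ := ⟨IsProbabilityMeasure.ne_zero μ₂⟩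
  haveI : NeZero (μ₁.prod μ₁) := ⟨IsProbabilityMeasure.ne_zero _⟩
  haveI : NeZero (μ₂.prod μ₂) := ⟨IsProbabilityMeasure.ne_zero _⟩
  -- laws of the components of `X'`
  have hmap1' : P.map (fun ω => firstCoords (X' ω)) = μ₁ := by
    have e1 : P.map (fun ω => firstCoords (X' ω)) = (P.map X').map firstCoords :=
      (Measure.map_map hφ1 hX').symm
    have e2 : P.map (fun ω => firstCoords (X ω)) = (P.map X).map firstCoords :=
      (Measure.map_map hφ1 hX).symm
    rw [hμ₁, e1, e2, hcopy]
  have hmap2' : P.map (fun ω => lastCoords (X' ω)) = μ₂ := by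
    have e1 : P.map (fun ω => lastCoords (X' ω)) = (P.map X').map lastCoords :=
      (Measure.map_map hφ2 hX').symm
    have e2 : P.map (fun ω => lastCoords (X ω)) = (P.map X).map lastCoords :=
      (Measure.map_map hφ2 hX).symm
    rw [hμ₂, e1, e2, hcopy]
  -- product laws obtained from independence
  have hT : Measurable fun ω => (firstCoords (X ω), lastCoords (X ω)) := hX1.prodMk hX2
  have hT' : Measurable fun ω => (firstCoords (X' ω), lastCoords (X' ω)) := hX1'.prodMk hX2'
  have hmapT : P.map (fun ω => (firstCoords (X ω), lastCoords (X ω))) = μ₁.prod μ₂ :=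
    (indepFun_iff_map_prod_eq_prod_map_map hX1.aemeasurable hX2.aemeasurable).1 hindep
  have hmapT' : P.map (fun ω => (firstCoords (X' ω), lastCoords (X' ω))) = μ₁.prod μ₂ := by
    have e1 : P.map (fun ω => (firstCoords (X' ω), lastCoords (X' ω)))
        = (P.map X').map (fun x => (firstCoords x, lastCoords x)) :=
      (Measure.map_map hφ hX').symm
    have e2 : P.map (fun ω => (firstCoords (X ω), lastCoords (X ω)))
        = (P.map X).map (fun x => (firstCoords x, lastCoords x)) :=
      (Measure.map_map hφ hX).symm
    rw [e1, hcopy, ← e2, hmapT]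
  have hpair1 : P.map (fun ω => (firstCoords (X ω), firstCoords (X' ω))) = μ₁.prod μ₁ := by
    have hI : IndepFun (fun ω => firstCoords (X ω)) (fun ω => firstCoords (X' ω)) P :=
      hindepcopy.comp hφ1 hφ1
    rw [(indepFun_iff_map_prod_eq_prod_map_map hX1.aemeasurable hX1'.aemeasurable).1 hI,
      hmap1', hμ₁]
  have hpair2 : P.map (fun ω => (lastCoords (X ω), lastCoords (X' ω))) = μ₂.prod μ₂ := by
    have hI : IndepFun (fun ω => lastCoords (X ω)) (fun ω => lastCoords (X' ω)) P :=
      hindepcopy.comp hφ2 hφ2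
    rw [(indepFun_iff_map_prod_eq_prod_map_map hX2.aemeasurable hX2'.aemeasurable).1 hI,
      hmap2', hμ₂]
  -- the law of the shuffled quadruple
  have hTT' : IndepFun (fun ω => (firstCoords (X ω), lastCoords (X ω)))
      (fun ω => (firstCoords (X' ω), lastCoords (X' ω))) P :=
    hindepcopy.comp hφ hφ
  have hS : Measurable fun ω => ((firstCoords (X ω), lastCoords (X ω)),
      (firstCoords (X' ω), lastCoords (X' ω))) := hT.prodMk hT'
  have hmapSpair : P.map (fun ω => ((firstCoords (X ω), lastCoords (X ω)),
      (firstCoords (X' ω), lastCoords (X' ω)))) = (μ₁.prod μ₂).prod (μ₁.prod μ₂) := by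
    rw [(indepFun_iff_map_prod_eq_prod_map_map hT.aemeasurable hT'.aemeasurable).1 hTT',
      hmapT, hmapT']
  have hsh := NGCAaux.measurePreserving_shuffle μ₁ μ₂ μ₁ μ₂
  have hS' : Measurable fun ω => ((firstCoords (X ω), firstCoords (X' ω)),
      (lastCoords (X ω), lastCoords (X' ω))) := (hX1.prodMk hX1').prodMk (hX2.prodMk hX2')
  have hmapS : P.map (fun ω => ((firstCoords (X ω), firstCoords (X' ω)),
      (lastCoords (X ω), lastCoords (X' ω)))) = (μ₁.prod μ₁).prod (μ₂.prod μ₂) := by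
    calc P.map (fun ω => ((firstCoords (X ω), firstCoords (X' ω)),
          (lastCoords (X ω), lastCoords (X' ω))))
        = (P.map (fun ω => ((firstCoords (X ω), lastCoords (X ω)),
            (firstCoords (X' ω), lastCoords (X' ω))))).map
              (fun p => ((p.1.1, p.2.1), (p.1.2, p.2.2))) :=
          (Measure.map_map hsh.measurable hS).symm
      _ = (μ₁.prod μ₁).prod (μ₂.prod μ₂) := by rw [hmapSpair]; exact hsh.map_eq
  -- integral transfer principles
  have hIT : ∀ F : (EuclideanSpace ℝ (Fin d)) × (EuclideanSpace ℝ (Fin m)) → ℝ, Measurable F →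
      ∫ ω, F (firstCoords (X ω), lastCoords (X ω)) ∂P = ∫ p, F p ∂(μ₁.prod μ₂) := by
    intro F hF
    rw [← hmapT]
    exact (integral_map hT.aemeasurable hF.aestronglyMeasurable).symm
  have hIS : ∀ F : ((EuclideanSpace ℝ (Fin d)) × (EuclideanSpace ℝ (Fin d)))
        × ((EuclideanSpace ℝ (Fin m)) × (EuclideanSpace ℝ (Fin m))) → ℝ, Measurable F →
      ∫ ω, F ((firstCoords (X ω), firstCoords (X' ω)), (lastCoords (X ω), lastCoords (X' ω))) ∂P
        = ∫ p, F p ∂((μ₁.prod μ₁).prod (μ₂.prod μ₂)) := by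
    intro F hF
    rw [← hmapS]
    exact (integral_map hS'.aemeasurable hF.aestronglyMeasurable).symm
  have hI1 : ∀ G : EuclideanSpace ℝ (Fin d) → ℝ, Measurable G →
      ∫ ω, G (firstCoords (X ω)) ∂P = ∫ x, G x ∂μ₁ := by
    intro G hG
    rw [hμ₁]
    exact (integral_map hX1.aemeasurable hG.aestronglyMeasurable).symm
  have hI2 : ∀ G : EuclideanSpace ℝ (Fin m) → ℝ, Measurable G →
      ∫ ω, G (lastCoords (X ω)) ∂P = ∫ x, G x ∂μ₂ := by
    intro G hG
    rw [hμ₂]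
    exact (integral_map hX2.aemeasurable hG.aestronglyMeasurable).symm
  have hIp1 : ∀ G : (EuclideanSpace ℝ (Fin d)) × (EuclideanSpace ℝ (Fin d)) → ℝ, Measurable G →
      ∫ ω, G (firstCoords (X ω), firstCoords (X' ω)) ∂P = ∫ q, G q ∂(μ₁.prod μ₁) := by
    intro G hG
    rw [← hpair1]
    exact (integral_map (hX1.prodMk hX1').aemeasurable hG.aestronglyMeasurable).symm
  have hIp2 : ∀ G : (EuclideanSpace ℝ (Fin m)) × (EuclideanSpace ℝ (Fin m)) → ℝ, Measurable G →
      ∫ ω, G (lastCoords (X ω), lastCoords (X' ω)) ∂P = ∫ q, G q ∂(μ₂.prod μ₂) := by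
    intro G hG
    rw [← hpair2]
    exact (integral_map (hX2.prodMk hX2').aemeasurable hG.aestronglyMeasurable).symm
  -- explicit measurability facts
  have mc1 : ∀ k : Fin d, Measurable fun x : EuclideanSpace ℝ (Fin d) => x k :=
    fun k => (measurable_pi_apply k).comp (WithLp.measurable_ofLp 2 _)
  have mc2 : ∀ k : Fin m, Measurable fun x : EuclideanSpace ℝ (Fin m) => x k :=
    fun k => (measurable_pi_apply k).comp (WithLp.measurable_ofLp 2 _)
  have mw1 : Measurable fun x : EuclideanSpace ℝ (Fin d) => Real.exp (-α * ‖x‖ ^ 2) :=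
    ((measurable_norm.pow_const 2).const_mul (-α)).exp
  have mw2 : Measurable fun x : EuclideanSpace ℝ (Fin m) => Real.exp (-α * ‖x‖ ^ 2) :=
    ((measurable_norm.pow_const 2).const_mul (-α)).exp
  have mv1 : Measurable fun q : (EuclideanSpace ℝ (Fin d)) × (EuclideanSpace ℝ (Fin d)) =>
      Real.exp (-α * ⟪q.1, q.2⟫) :=
    ((measurable_fst.inner measurable_snd).const_mul (-α)).exp
  have mv2 : Measurable fun q : (EuclideanSpace ℝ (Fin m)) × (EuclideanSpace ℝ (Fin m)) =>
      Real.exp (-α * ⟪q.1, q.2⟫) :=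
    ((measurable_fst.inner measurable_snd).const_mul (-α)).exp
  -- pointwise splittings of the exponential weights
  have hsplitΦ : ∀ ω, Real.exp (-α * ‖X ω‖ ^ 2)
      = Real.exp (-α * ‖firstCoords (X ω)‖ ^ 2) * Real.exp (-α * ‖lastCoords (X ω)‖ ^ 2) := by
    intro ω
    rw [← Real.exp_add, NGCAaux.norm_split (X ω)]
    congr 1
    ring
  have hsplitΨ : ∀ ω, Real.exp (-α * ⟪X ω, X' ω⟫)
      = Real.exp (-α * ⟪firstCoords (X ω), firstCoords (X' ω)⟫)
        * Real.exp (-α * ⟪lastCoords (X ω), lastCoords (X' ω)⟫) := by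
    intro ω
    rw [← Real.exp_add, NGCAaux.inner_split (X ω) (X' ω)]
    congr 1
    ring
  -- integrability of the factored weights, and positivity of the partition functions
  have hIntΦprod : Integrable (fun p : (EuclideanSpace ℝ (Fin d)) × (EuclideanSpace ℝ (Fin m)) =>
      Real.exp (-α * ‖p.1‖ ^ 2) * Real.exp (-α * ‖p.2‖ ^ 2)) (μ₁.prod μ₂) := by
    rw [← hmapT]
    refine (integrable_map_measure (((mw1.comp measurable_fst).mul (mw2.comp measurable_snd)).aestronglyMeasurable) hT.aemeasurable).2 ?_
    exact hΦZ.congr (Filter.Eventually.of_forall fun ω => hsplitΦ ω)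
  obtain ⟨hw1int, hw2int⟩ := NGCAaux.integrable_of_prod mw1 mw2
    (fun _ => Real.exp_pos _) (fun _ => Real.exp_pos _) hIntΦprod
  have hZ1pos : 0 < ∫ x, Real.exp (-α * ‖x‖ ^ 2) ∂μ₁ := integral_exp_pos hw1int
  have hZ2pos : 0 < ∫ x, Real.exp (-α * ‖x‖ ^ 2) ∂μ₂ := integral_exp_pos hw2int
  have hIntΨprod : Integrable (fun p : ((EuclideanSpace ℝ (Fin d)) × (EuclideanSpace ℝ (Fin d)))
        × ((EuclideanSpace ℝ (Fin m)) × (EuclideanSpace ℝ (Fin m))) =>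
      Real.exp (-α * ⟪p.1.1, p.1.2⟫) * Real.exp (-α * ⟪p.2.1, p.2.2⟫))
      ((μ₁.prod μ₁).prod (μ₂.prod μ₂)) := by
    rw [← hmapS]
    refine (integrable_map_measure (((mv1.comp measurable_fst).mul (mv2.comp measurable_snd)).aestronglyMeasurable) hS'.aemeasurable).2 ?_
    exact hΨZ.congr (Filter.Eventually.of_forall fun ω => hsplitΨ ω)
  obtain ⟨hv1int, hv2int⟩ := NGCAaux.integrable_of_prod mv1 mv2
    (fun _ => Real.exp_pos _) (fun _ => Real.exp_pos _) hIntΨprod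
  have hZApos : 0 < ∫ q, Real.exp (-α * ⟪q.1, q.2⟫) ∂(μ₁.prod μ₁) := integral_exp_pos hv1int
  have hZBpos : 0 < ∫ q, Real.exp (-α * ⟪q.1, q.2⟫) ∂(μ₂.prod μ₂) := integral_exp_pos hv2int
  -- the gaussian odd integrals vanish
  have hμ₂eq : μ₂ = stdGaussian m := hgauss
  have hnegmp : MeasurePreserving (fun x : EuclideanSpace ℝ (Fin m) => -x) μ₂ μ₂ :=
    ⟨measurable_neg, by rw [hμ₂eq]; exact NGCAaux.stdGaussian_map_neg m⟩
  have hodd1 : ∀ j : Fin m, ∫ x, Real.exp (-α * ‖x‖ ^ 2) * x j ∂μ₂ = 0 := by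
    intro j
    refine NGCAaux.integral_eq_zero_of_neg_inv μ₂ _ measurable_neg hnegmp.map_eq
      (mw2.mul (mc2 j)) fun x => ?_
    simp only [norm_neg, PiLp.neg_apply]
    ring
  have hodd2a : ∀ j : Fin m,
      ∫ q : (EuclideanSpace ℝ (Fin m)) × (EuclideanSpace ℝ (Fin m)),
        Real.exp (-α * ⟪q.1, q.2⟫) * q.1 j ∂(μ₂.prod μ₂) = 0 := by
    intro j
    refine NGCAaux.integral_eq_zero_of_neg_inv (μ₂.prod μ₂)
      (Prod.map (fun x => -x) (fun x => -x)) (measurable_neg.prodMap measurable_neg)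
      (hnegmp.prod hnegmp).map_eq (mv2.mul ((mc2 j).comp measurable_fst)) fun q => ?_
    simp only [Prod.map_fst, Prod.map_snd, inner_neg_neg, PiLp.neg_apply]
    ring
  have hodd2b : ∀ j : Fin m,
      ∫ q : (EuclideanSpace ℝ (Fin m)) × (EuclideanSpace ℝ (Fin m)),
        Real.exp (-α * ⟪q.1, q.2⟫) * q.2 j ∂(μ₂.prod μ₂) = 0 := by
    intro j
    refine NGCAaux.integral_eq_zero_of_neg_inv (μ₂.prod μ₂)
      (Prod.map (fun x => -x) (fun x => -x)) (measurable_neg.prodMap measurable_neg)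
      (hnegmp.prod hnegmp).map_eq (mv2.mul ((mc2 j).comp measurable_snd)) fun q => ?_
    simp only [Prod.map_fst, Prod.map_snd, inner_neg_neg, PiLp.neg_apply]
    ring
  -- the partition function of X itself
  have eZΦ : ∫ ω, Real.exp (-α * ‖X ω‖ ^ 2) ∂P
      = (∫ x, Real.exp (-α * ‖x‖ ^ 2) ∂μ₁) * ∫ x, Real.exp (-α * ‖x‖ ^ 2) ∂μ₂ := by
    calc ∫ ω, Real.exp (-α * ‖X ω‖ ^ 2) ∂P
        = ∫ ω, (fun p : (EuclideanSpace ℝ (Fin d)) × (EuclideanSpace ℝ (Fin m)) =>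
            Real.exp (-α * ‖p.1‖ ^ 2) * Real.exp (-α * ‖p.2‖ ^ 2))
              (firstCoords (X ω), lastCoords (X ω)) ∂P :=
          integral_congr_ae (Filter.Eventually.of_forall fun ω => hsplitΦ ω)
      _ = ∫ p, Real.exp (-α * ‖p.1‖ ^ 2) * Real.exp (-α * ‖p.2‖ ^ 2) ∂(μ₁.prod μ₂) :=
          hIT _ ((mw1.comp measurable_fst).mul (mw2.comp measurable_snd))
      _ = _ := integral_prod_mul (fun x : EuclideanSpace ℝ (Fin d) => Real.exp (-α * ‖x‖ ^ 2)) (fun x : EuclideanSpace ℝ (Fin m) => Real.exp (-α * ‖x‖ ^ 2))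
  have eZΨ : ∫ ω, Real.exp (-α * ⟪X ω, X' ω⟫) ∂P
      = (∫ q, Real.exp (-α * ⟪q.1, q.2⟫) ∂(μ₁.prod μ₁))
        * ∫ q, Real.exp (-α * ⟪q.1, q.2⟫) ∂(μ₂.prod μ₂) := by
    calc ∫ ω, Real.exp (-α * ⟪X ω, X' ω⟫) ∂P
        = ∫ ω, (fun p : ((EuclideanSpace ℝ (Fin d)) × (EuclideanSpace ℝ (Fin d)))
            × ((EuclideanSpace ℝ (Fin m)) × (EuclideanSpace ℝ (Fin m))) =>
            Real.exp (-α * ⟪p.1.1, p.1.2⟫) * Real.exp (-α * ⟪p.2.1, p.2.2⟫))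
              ((firstCoords (X ω), firstCoords (X' ω)),
                (lastCoords (X ω), lastCoords (X' ω))) ∂P :=
          integral_congr_ae (Filter.Eventually.of_forall fun ω => hsplitΨ ω)
      _ = ∫ p, Real.exp (-α * ⟪p.1.1, p.1.2⟫) * Real.exp (-α * ⟪p.2.1, p.2.2⟫)
            ∂((μ₁.prod μ₁).prod (μ₂.prod μ₂)) := hIS _ ((mv1.comp measurable_fst).mul (mv2.comp measurable_snd))
      _ = _ := integral_prod_mul (fun q : (EuclideanSpace ℝ (Fin d)) × (EuclideanSpace ℝ (Fin d)) => Real.exp (-α * ⟪q.1, q.2⟫)) (fun q : (EuclideanSpace ℝ (Fin m)) × (EuclideanSpace ℝ (Fin m)) => Real.exp (-α * ⟪q.1, q.2⟫))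
  refine ⟨?_, ?_, ?_, ?_, ?_, ?_⟩
  · -- Φ top-left block
    intro i j
    have eN : ∫ ω, Real.exp (-α * ‖X ω‖ ^ 2) * (X ω (Fin.castAdd m i) * X ω (Fin.castAdd m j)) ∂P
        = (∫ x, Real.exp (-α * ‖x‖ ^ 2) * (x i * x j) ∂μ₁)
          * ∫ x, Real.exp (-α * ‖x‖ ^ 2) ∂μ₂ := by
      calc ∫ ω, Real.exp (-α * ‖X ω‖ ^ 2) * (X ω (Fin.castAdd m i) * X ω (Fin.castAdd m j)) ∂P
          = ∫ ω, (fun p : (EuclideanSpace ℝ (Fin d)) × (EuclideanSpace ℝ (Fin m)) =>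
              Real.exp (-α * ‖p.1‖ ^ 2) * (p.1 i * p.1 j) * Real.exp (-α * ‖p.2‖ ^ 2))
                (firstCoords (X ω), lastCoords (X ω)) ∂P := by
            refine integral_congr_ae (Filter.Eventually.of_forall fun ω => ?_)
            simp only [hsplitΦ ω, NGCAaux.firstCoords_apply, NGCAaux.lastCoords_apply]
            ring
        _ = ∫ p, Real.exp (-α * ‖p.1‖ ^ 2) * (p.1 i * p.1 j) * Real.exp (-α * ‖p.2‖ ^ 2)
              ∂(μ₁.prod μ₂) := hIT _ (((mw1.comp measurable_fst).mul (((mc1 i).comp measurable_fst).mul ((mc1 j).comp measurable_fst))).mul (mw2.comp measurable_snd))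
        _ = _ := integral_prod_mul (fun x : EuclideanSpace ℝ (Fin d) => Real.exp (-α * ‖x‖ ^ 2) * (x i * x j)) (fun x : EuclideanSpace ℝ (Fin m) => Real.exp (-α * ‖x‖ ^ 2))
    have eZr : ∫ ω, Real.exp (-α * ‖firstCoords (X ω)‖ ^ 2) ∂P
        = ∫ x, Real.exp (-α * ‖x‖ ^ 2) ∂μ₁ := hI1 _ mw1
    have eNr : ∫ ω, Real.exp (-α * ‖firstCoords (X ω)‖ ^ 2)
          * (firstCoords (X ω) i * firstCoords (X ω) j) ∂P
        = ∫ x, Real.exp (-α * ‖x‖ ^ 2) * (x i * x j) ∂μ₁ := hI1 _ (mw1.mul ((mc1 i).mul (mc1 j)))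
    simp only [PhiMat, Matrix.smul_apply, Matrix.of_apply, smul_eq_mul]
    rw [eZΦ, eN, eZr, eNr]
    exact NGCAaux.cancel_right hZ2pos.ne'
  · -- Φ bottom-right block
    intro i j
    have eN : ∫ ω, Real.exp (-α * ‖X ω‖ ^ 2) * (X ω (Fin.natAdd d i) * X ω (Fin.natAdd d j)) ∂P
        = (∫ x, Real.exp (-α * ‖x‖ ^ 2) ∂μ₁)
          * ∫ x, Real.exp (-α * ‖x‖ ^ 2) * (x i * x j) ∂μ₂ := by
      calc ∫ ω, Real.exp (-α * ‖X ω‖ ^ 2) * (X ω (Fin.natAdd d i) * X ω (Fin.natAdd d j)) ∂P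
          = ∫ ω, (fun p : (EuclideanSpace ℝ (Fin d)) × (EuclideanSpace ℝ (Fin m)) =>
              Real.exp (-α * ‖p.1‖ ^ 2) * (Real.exp (-α * ‖p.2‖ ^ 2) * (p.2 i * p.2 j)))
                (firstCoords (X ω), lastCoords (X ω)) ∂P := by
            refine integral_congr_ae (Filter.Eventually.of_forall fun ω => ?_)
            simp only [hsplitΦ ω, NGCAaux.firstCoords_apply, NGCAaux.lastCoords_apply]
            ring
        _ = ∫ p, Real.exp (-α * ‖p.1‖ ^ 2) * (Real.exp (-α * ‖p.2‖ ^ 2) * (p.2 i * p.2 j))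
              ∂(μ₁.prod μ₂) := hIT _ ((mw1.comp measurable_fst).mul ((mw2.comp measurable_snd).mul (((mc2 i).comp measurable_snd).mul ((mc2 j).comp measurable_snd))))
        _ = _ := integral_prod_mul (fun x : EuclideanSpace ℝ (Fin d) => Real.exp (-α * ‖x‖ ^ 2)) (fun x : EuclideanSpace ℝ (Fin m) => Real.exp (-α * ‖x‖ ^ 2) * (x i * x j))
    have eZr : ∫ ω, Real.exp (-α * ‖lastCoords (X ω)‖ ^ 2) ∂P
        = ∫ x, Real.exp (-α * ‖x‖ ^ 2) ∂μ₂ := hI2 _ mw2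
    have eNr : ∫ ω, Real.exp (-α * ‖lastCoords (X ω)‖ ^ 2)
          * (lastCoords (X ω) i * lastCoords (X ω) j) ∂P
        = ∫ x, Real.exp (-α * ‖x‖ ^ 2) * (x i * x j) ∂μ₂ := hI2 _ (mw2.mul ((mc2 i).mul (mc2 j)))
    simp only [PhiMat, Matrix.smul_apply, Matrix.of_apply, smul_eq_mul]
    rw [eZΦ, eN, eZr, eNr]
    exact NGCAaux.cancel_left hZ1pos.ne'
  · -- Φ off-diagonal blocks
    intro i j
    constructor
    · have eN : ∫ ω, Real.exp (-α * ‖X ω‖ ^ 2)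
          * (X ω (Fin.castAdd m i) * X ω (Fin.natAdd d j)) ∂P = 0 := by
        calc ∫ ω, Real.exp (-α * ‖X ω‖ ^ 2) * (X ω (Fin.castAdd m i) * X ω (Fin.natAdd d j)) ∂P
            = ∫ ω, (fun p : (EuclideanSpace ℝ (Fin d)) × (EuclideanSpace ℝ (Fin m)) =>
                (Real.exp (-α * ‖p.1‖ ^ 2) * p.1 i) * (Real.exp (-α * ‖p.2‖ ^ 2) * p.2 j))
                  (firstCoords (X ω), lastCoords (X ω)) ∂P := by
              refine integral_congr_ae (Filter.Eventually.of_forall fun ω => ?_)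
              simp only [hsplitΦ ω, NGCAaux.firstCoords_apply, NGCAaux.lastCoords_apply]
              ring
          _ = ∫ p, (Real.exp (-α * ‖p.1‖ ^ 2) * p.1 i) * (Real.exp (-α * ‖p.2‖ ^ 2) * p.2 j)
                ∂(μ₁.prod μ₂) := hIT _ (((mw1.comp measurable_fst).mul ((mc1 i).comp measurable_fst)).mul ((mw2.comp measurable_snd).mul ((mc2 j).comp measurable_snd)))
          _ = (∫ x, Real.exp (-α * ‖x‖ ^ 2) * x i ∂μ₁)
                * ∫ x, Real.exp (-α * ‖x‖ ^ 2) * x j ∂μ₂ := integral_prod_mul (fun x : EuclideanSpace ℝ (Fin d) => Real.exp (-α * ‖x‖ ^ 2) * x i) (fun x : EuclideanSpace ℝ (Fin m) => Real.exp (-α * ‖x‖ ^ 2) * x j)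
          _ = 0 := by rw [hodd1 j, mul_zero]
      simp only [PhiMat, Matrix.smul_apply, Matrix.of_apply, smul_eq_mul]
      rw [eN, mul_zero]
    · have eN : ∫ ω, Real.exp (-α * ‖X ω‖ ^ 2)
          * (X ω (Fin.natAdd d j) * X ω (Fin.castAdd m i)) ∂P = 0 := by
        calc ∫ ω, Real.exp (-α * ‖X ω‖ ^ 2) * (X ω (Fin.natAdd d j) * X ω (Fin.castAdd m i)) ∂P
            = ∫ ω, (fun p : (EuclideanSpace ℝ (Fin d)) × (EuclideanSpace ℝ (Fin m)) =>
                (Real.exp (-α * ‖p.1‖ ^ 2) * p.1 i) * (Real.exp (-α * ‖p.2‖ ^ 2) * p.2 j))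
                  (firstCoords (X ω), lastCoords (X ω)) ∂P := by
              refine integral_congr_ae (Filter.Eventually.of_forall fun ω => ?_)
              simp only [hsplitΦ ω, NGCAaux.firstCoords_apply, NGCAaux.lastCoords_apply]
              ring
          _ = ∫ p, (Real.exp (-α * ‖p.1‖ ^ 2) * p.1 i) * (Real.exp (-α * ‖p.2‖ ^ 2) * p.2 j)
                ∂(μ₁.prod μ₂) := hIT _ (((mw1.comp measurable_fst).mul ((mc1 i).comp measurable_fst)).mul ((mw2.comp measurable_snd).mul ((mc2 j).comp measurable_snd)))
          _ = (∫ x, Real.exp (-α * ‖x‖ ^ 2) * x i ∂μ₁)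
                * ∫ x, Real.exp (-α * ‖x‖ ^ 2) * x j ∂μ₂ := integral_prod_mul (fun x : EuclideanSpace ℝ (Fin d) => Real.exp (-α * ‖x‖ ^ 2) * x i) (fun x : EuclideanSpace ℝ (Fin m) => Real.exp (-α * ‖x‖ ^ 2) * x j)
          _ = 0 := by rw [hodd1 j, mul_zero]
      simp only [PhiMat, Matrix.smul_apply, Matrix.of_apply, smul_eq_mul]
      rw [eN, mul_zero]
  · -- Ψ top-left block
    intro i j
    have eN : ∫ ω, Real.exp (-α * ⟪X ω, X' ω⟫)
          * (X ω (Fin.castAdd m i) * X' ω (Fin.castAdd m j)) ∂P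
        = (∫ q, Real.exp (-α * ⟪q.1, q.2⟫) * (q.1 i * q.2 j) ∂(μ₁.prod μ₁))
          * ∫ q, Real.exp (-α * ⟪q.1, q.2⟫) ∂(μ₂.prod μ₂) := by
      calc ∫ ω, Real.exp (-α * ⟪X ω, X' ω⟫)
            * (X ω (Fin.castAdd m i) * X' ω (Fin.castAdd m j)) ∂P
          = ∫ ω, (fun p : ((EuclideanSpace ℝ (Fin d)) × (EuclideanSpace ℝ (Fin d)))
              × ((EuclideanSpace ℝ (Fin m)) × (EuclideanSpace ℝ (Fin m))) =>
              Real.exp (-α * ⟪p.1.1, p.1.2⟫) * (p.1.1 i * p.1.2 j)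
                * Real.exp (-α * ⟪p.2.1, p.2.2⟫))
                ((firstCoords (X ω), firstCoords (X' ω)),
                  (lastCoords (X ω), lastCoords (X' ω))) ∂P := by
            refine integral_congr_ae (Filter.Eventually.of_forall fun ω => ?_)
            simp only [hsplitΨ ω, NGCAaux.firstCoords_apply, NGCAaux.lastCoords_apply]
            ring
        _ = ∫ p, Real.exp (-α * ⟪p.1.1, p.1.2⟫) * (p.1.1 i * p.1.2 j)
              * Real.exp (-α * ⟪p.2.1, p.2.2⟫) ∂((μ₁.prod μ₁).prod (μ₂.prod μ₂)) :=
            hIS _ (((mv1.comp measurable_fst).mul (((mc1 i).comp (measurable_fst.comp measurable_fst)).mul ((mc1 j).comp (measurable_snd.comp measurable_fst)))).mul (mv2.comp measurable_snd))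
        _ = _ := integral_prod_mul (fun q : (EuclideanSpace ℝ (Fin d)) × (EuclideanSpace ℝ (Fin d)) => Real.exp (-α * ⟪q.1, q.2⟫) * (q.1 i * q.2 j)) (fun q : (EuclideanSpace ℝ (Fin m)) × (EuclideanSpace ℝ (Fin m)) => Real.exp (-α * ⟪q.1, q.2⟫))
    have eZr : ∫ ω, Real.exp (-α * ⟪firstCoords (X ω), firstCoords (X' ω)⟫) ∂P
        = ∫ q, Real.exp (-α * ⟪q.1, q.2⟫) ∂(μ₁.prod μ₁) := hIp1 _ mv1
    have eNr : ∫ ω, Real.exp (-α * ⟪firstCoords (X ω), firstCoords (X' ω)⟫)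
          * (firstCoords (X ω) i * firstCoords (X' ω) j) ∂P
        = ∫ q, Real.exp (-α * ⟪q.1, q.2⟫) * (q.1 i * q.2 j) ∂(μ₁.prod μ₁) :=
      hIp1 _ (mv1.mul (((mc1 i).comp measurable_fst).mul ((mc1 j).comp measurable_snd)))
    simp only [PsiMat, Matrix.smul_apply, Matrix.of_apply, smul_eq_mul]
    rw [eZΨ, eN, eZr, eNr]
    exact NGCAaux.cancel_right hZBpos.ne'
  · -- Ψ bottom-right block
    intro i j
    have eN : ∫ ω, Real.exp (-α * ⟪X ω, X' ω⟫)
          * (X ω (Fin.natAdd d i) * X' ω (Fin.natAdd d j)) ∂P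
        = (∫ q, Real.exp (-α * ⟪q.1, q.2⟫) ∂(μ₁.prod μ₁))
          * ∫ q, Real.exp (-α * ⟪q.1, q.2⟫) * (q.1 i * q.2 j) ∂(μ₂.prod μ₂) := by
      calc ∫ ω, Real.exp (-α * ⟪X ω, X' ω⟫)
            * (X ω (Fin.natAdd d i) * X' ω (Fin.natAdd d j)) ∂P
          = ∫ ω, (fun p : ((EuclideanSpace ℝ (Fin d)) × (EuclideanSpace ℝ (Fin d)))
              × ((EuclideanSpace ℝ (Fin m)) × (EuclideanSpace ℝ (Fin m))) =>
              Real.exp (-α * ⟪p.1.1, p.1.2⟫)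
                * (Real.exp (-α * ⟪p.2.1, p.2.2⟫) * (p.2.1 i * p.2.2 j)))
                ((firstCoords (X ω), firstCoords (X' ω)),
                  (lastCoords (X ω), lastCoords (X' ω))) ∂P := by
            refine integral_congr_ae (Filter.Eventually.of_forall fun ω => ?_)
            simp only [hsplitΨ ω, NGCAaux.firstCoords_apply, NGCAaux.lastCoords_apply]
            ring
        _ = ∫ p, Real.exp (-α * ⟪p.1.1, p.1.2⟫)
              * (Real.exp (-α * ⟪p.2.1, p.2.2⟫) * (p.2.1 i * p.2.2 j))
              ∂((μ₁.prod μ₁).prod (μ₂.prod μ₂)) := hIS _ ((mv1.comp measurable_fst).mul ((mv2.comp measurable_snd).mul (((mc2 i).comp (measurable_fst.comp measurable_snd)).mul ((mc2 j).comp (measurable_snd.comp measurable_snd)))))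
        _ = _ := integral_prod_mul (fun q : (EuclideanSpace ℝ (Fin d)) × (EuclideanSpace ℝ (Fin d)) => Real.exp (-α * ⟪q.1, q.2⟫)) (fun q : (EuclideanSpace ℝ (Fin m)) × (EuclideanSpace ℝ (Fin m)) => Real.exp (-α * ⟪q.1, q.2⟫) * (q.1 i * q.2 j))
    have eZr : ∫ ω, Real.exp (-α * ⟪lastCoords (X ω), lastCoords (X' ω)⟫) ∂P
        = ∫ q, Real.exp (-α * ⟪q.1, q.2⟫) ∂(μ₂.prod μ₂) := hIp2 _ mv2
    have eNr : ∫ ω, Real.exp (-α * ⟪lastCoords (X ω), lastCoords (X' ω)⟫)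
          * (lastCoords (X ω) i * lastCoords (X' ω) j) ∂P
        = ∫ q, Real.exp (-α * ⟪q.1, q.2⟫) * (q.1 i * q.2 j) ∂(μ₂.prod μ₂) :=
      hIp2 _ (mv2.mul (((mc2 i).comp measurable_fst).mul ((mc2 j).comp measurable_snd)))
    simp only [PsiMat, Matrix.smul_apply, Matrix.of_apply, smul_eq_mul]
    rw [eZΨ, eN, eZr, eNr]
    exact NGCAaux.cancel_left hZApos.ne'
  · -- Ψ off-diagonal blocks
    intro i j
    constructor
    · have eN : ∫ ω, Real.exp (-α * ⟪X ω, X' ω⟫)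
          * (X ω (Fin.castAdd m i) * X' ω (Fin.natAdd d j)) ∂P = 0 := by
        calc ∫ ω, Real.exp (-α * ⟪X ω, X' ω⟫)
              * (X ω (Fin.castAdd m i) * X' ω (Fin.natAdd d j)) ∂P
            = ∫ ω, (fun p : ((EuclideanSpace ℝ (Fin d)) × (EuclideanSpace ℝ (Fin d)))
                × ((EuclideanSpace ℝ (Fin m)) × (EuclideanSpace ℝ (Fin m))) =>
                (Real.exp (-α * ⟪p.1.1, p.1.2⟫) * p.1.1 i)
                  * (Real.exp (-α * ⟪p.2.1, p.2.2⟫) * p.2.2 j))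
                  ((firstCoords (X ω), firstCoords (X' ω)),
                    (lastCoords (X ω), lastCoords (X' ω))) ∂P := by
              refine integral_congr_ae (Filter.Eventually.of_forall fun ω => ?_)
              simp only [hsplitΨ ω, NGCAaux.firstCoords_apply, NGCAaux.lastCoords_apply]
              ring
          _ = ∫ p, (Real.exp (-α * ⟪p.1.1, p.1.2⟫) * p.1.1 i)
                * (Real.exp (-α * ⟪p.2.1, p.2.2⟫) * p.2.2 j)
                ∂((μ₁.prod μ₁).prod (μ₂.prod μ₂)) := hIS _ (((mv1.comp measurable_fst).mul ((mc1 i).comp (measurable_fst.comp measurable_fst))).mul ((mv2.comp measurable_snd).mul ((mc2 j).comp (measurable_snd.comp measurable_snd))))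
          _ = (∫ q, Real.exp (-α * ⟪q.1, q.2⟫) * q.1 i ∂(μ₁.prod μ₁))
                * ∫ q, Real.exp (-α * ⟪q.1, q.2⟫) * q.2 j ∂(μ₂.prod μ₂) :=
              integral_prod_mul (fun q : (EuclideanSpace ℝ (Fin d)) × (EuclideanSpace ℝ (Fin d)) => Real.exp (-α * ⟪q.1, q.2⟫) * q.1 i) (fun q : (EuclideanSpace ℝ (Fin m)) × (EuclideanSpace ℝ (Fin m)) => Real.exp (-α * ⟪q.1, q.2⟫) * q.2 j)
          _ = 0 := by rw [hodd2b j, mul_zero]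
      simp only [PsiMat, Matrix.smul_apply, Matrix.of_apply, smul_eq_mul]
      rw [eN, mul_zero]
    · have eN : ∫ ω, Real.exp (-α * ⟪X ω, X' ω⟫)
          * (X ω (Fin.natAdd d j) * X' ω (Fin.castAdd m i)) ∂P = 0 := by
        calc ∫ ω, Real.exp (-α * ⟪X ω, X' ω⟫)
              * (X ω (Fin.natAdd d j) * X' ω (Fin.castAdd m i)) ∂P
            = ∫ ω, (fun p : ((EuclideanSpace ℝ (Fin d)) × (EuclideanSpace ℝ (Fin d)))
                × ((EuclideanSpace ℝ (Fin m)) × (EuclideanSpace ℝ (Fin m))) =>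
                (Real.exp (-α * ⟪p.1.1, p.1.2⟫) * p.1.2 i)
                  * (Real.exp (-α * ⟪p.2.1, p.2.2⟫) * p.2.1 j))
                  ((firstCoords (X ω), firstCoords (X' ω)),
                    (lastCoords (X ω), lastCoords (X' ω))) ∂P := by
              refine integral_congr_ae (Filter.Eventually.of_forall fun ω => ?_)
              simp only [hsplitΨ ω, NGCAaux.firstCoords_apply, NGCAaux.lastCoords_apply]
              ring
          _ = ∫ p, (Real.exp (-α * ⟪p.1.1, p.1.2⟫) * p.1.2 i)
                * (Real.exp (-α * ⟪p.2.1, p.2.2⟫) * p.2.1 j)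
                ∂((μ₁.prod μ₁).prod (μ₂.prod μ₂)) := hIS _ (((mv1.comp measurable_fst).mul ((mc1 i).comp (measurable_snd.comp measurable_fst))).mul ((mv2.comp measurable_snd).mul ((mc2 j).comp (measurable_fst.comp measurable_snd))))
          _ = (∫ q, Real.exp (-α * ⟪q.1, q.2⟫) * q.2 i ∂(μ₁.prod μ₁))
                * ∫ q, Real.exp (-α * ⟪q.1, q.2⟫) * q.1 j ∂(μ₂.prod μ₂) :=
              integral_prod_mul (fun q : (EuclideanSpace ℝ (Fin d)) × (EuclideanSpace ℝ (Fin d)) => Real.exp (-α * ⟪q.1, q.2⟫) * q.2 i) (fun q : (EuclideanSpace ℝ (Fin m)) × (EuclideanSpace ℝ (Fin m)) => Real.exp (-α * ⟪q.1, q.2⟫) * q.1 j)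
          _ = 0 := by rw [hodd2a j, mul_zero]
      simp only [PsiMat, Matrix.smul_apply, Matrix.of_apply, smul_eq_mul]
      rw [eN, mul_zero]


end
end
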